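/- arXiv:1809.05643 — 5 statements merged into one kernel-verified Lean document; each statement's English description precedes it below -/
import Mathlib

section
/- Let U be the Hilbert space of functions φ ∈ L¹_loc([0,∞)) possessing weak derivatives φ', φ'' ∈ L¹_loc([0,∞)) with ‖φ‖_U² := |φ(0)|² + |φ'(0)|² + ∫₀^∞ (|φ'(x)|² + |φ''(x)|²) w(x) dx < ∞, where w : [0,∞) → [1,∞) is nondecreasing C¹ with w^{-1/3} ∈ L¹. Then there is a constant C such that for all φ ∈ U: ‖φ‖_{L^∞([0,∞))} + ‖φ'‖_{L^∞([0,∞))} + ‖φ'‖_{L¹([0,∞))} + ‖φ''‖_{L¹([0,∞))} ≤ C ‖φ‖_U. In particular U embeds continuously into C¹_b([0,∞)). -/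
open MeasureTheory Set

/-- `g` is a (locally integrable) weak derivative of `f` on `[0,∞)`. -/
def IsWeakDerivOn (f g : ℝ → ℝ) : Prop :=
  LocallyIntegrableOn g (Set.Ici 0) ∧
  ∀ x y : ℝ, 0 ≤ y → y ≤ x → f x - f y = ∫ z in y..x, g z

/-- Membership in the weighted Hilbert space `U`:
`φ` has weak derivatives `d1`, `d2` on `[0,∞)` and the weighted integral in the
`U`-norm is finite. -/
def MemU (w φ d1 d2 : ℝ → ℝ) : Prop :=
  IsWeakDerivOn φ d1 ∧ IsWeakDerivOn d1 d2 ∧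
  IntegrableOn (fun x => ((d1 x) ^ 2 + (d2 x) ^ 2) * w x) (Set.Ici 0)

/-- The `U`-norm `‖φ‖_U = (|φ(0)|² + |φ'(0)|² + ∫₀^∞ (|φ'|² + |φ''|²) w)^{1/2}`. -/
noncomputable def UNorm (w φ d1 d2 : ℝ → ℝ) : ℝ :=
  Real.sqrt ((φ 0) ^ 2 + (d1 0) ^ 2 +
    ∫ x in Set.Ici (0:ℝ), ((d1 x) ^ 2 + (d2 x) ^ 2) * w x)


/-- Cauchy–Schwarz style bound: if `g² w` is integrable on `[0,∞)` with `w ≥ 1` there,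
and `w⁻¹` is integrable, then `g` is integrable with an explicit bound. -/
lemma key_cs (w : ℝ → ℝ) (hw1 : ∀ x ∈ Set.Ici (0:ℝ), 1 ≤ w x)
    (hwc : ContinuousOn w (Set.Ici 0))
    (hwinv : IntegrableOn (fun x => (w x)⁻¹) (Set.Ici 0))
    (g : ℝ → ℝ) (hg : AEStronglyMeasurable g (volume.restrict (Set.Ici 0)))
    (hg2 : IntegrableOn (fun x => g x ^ 2 * w x) (Set.Ici 0)) :
    IntegrableOn g (Set.Ici 0) ∧
    (∫ y in Set.Ici (0:ℝ), |g y|) ≤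
      Real.sqrt (∫ x in Set.Ici (0:ℝ), g x ^ 2 * w x) *
        Real.sqrt (∫ x in Set.Ici (0:ℝ), (w x)⁻¹) := by
  have hae : ∀ᵐ x ∂(volume.restrict (Set.Ici (0:ℝ))), x ∈ Set.Ici (0:ℝ) :=
    ae_restrict_mem measurableSet_Ici
  have hint : IntegrableOn g (Set.Ici 0) := by
    refine Integrable.mono' ((hg2.add hwinv).div_const 2) hg ?_
    filter_upwards [hae] with x hx
    have hw := hw1 x hx
    have hwpos : 0 < w x := by linarith
    simp only [Pi.add_apply]
    rw [Real.norm_eq_abs, le_div_iff₀ (by norm_num : (0:ℝ) < 2)]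
    have hinv : (w x)⁻¹ * w x = 1 := inv_mul_cancel₀ hwpos.ne'
    nlinarith [sq_nonneg (|g x| * w x - 1), sq_abs (g x), mul_pos hwpos hwpos,
      mul_nonneg (sq_nonneg (g x)) hwpos.le]
  refine ⟨hint, ?_⟩
  set μ := volume.restrict (Set.Ici (0:ℝ))
  set F : ℝ → ℝ := fun x => |g x| * Real.sqrt (w x) with hF
  set H : ℝ → ℝ := fun x => (Real.sqrt (w x))⁻¹ with hH
  have hsqc : ContinuousOn (fun x => Real.sqrt (w x)) (Set.Ici 0) :=
    Real.continuous_sqrt.comp_continuousOn hwc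
  have hsne : ∀ x ∈ Set.Ici (0:ℝ), Real.sqrt (w x) ≠ 0 := fun x hx => by
    have := hw1 x hx
    positivity
  have hFm : AEStronglyMeasurable F μ :=
    (by simpa [Real.norm_eq_abs] using hg.norm : AEStronglyMeasurable (fun x => |g x|) μ).mul (hsqc.aestronglyMeasurable measurableSet_Ici)
  have hHm : AEStronglyMeasurable H μ :=
    (hsqc.inv₀ hsne).aestronglyMeasurable measurableSet_Ici
  have hF2 : Integrable (fun x => F x ^ 2) μ := by
    refine hg2.congr ?_
    filter_upwards [hae] with x hx
    have hw := hw1 x hx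
    simp only [hF, mul_pow, sq_abs, Real.sq_sqrt (by linarith : (0:ℝ) ≤ w x)]
  have hH2 : Integrable (fun x => H x ^ 2) μ := by
    refine hwinv.congr ?_
    filter_upwards [hae] with x hx
    have hw := hw1 x hx
    simp only [hH, inv_pow, Real.sq_sqrt (by linarith : (0:ℝ) ≤ w x)]
  have hpq : Real.HolderConjugate 2 2 := Real.HolderConjugate.two_two
  have hFL : MemLp F (ENNReal.ofReal 2) μ := by
    rw [show ENNReal.ofReal 2 = 2 by norm_num]
    exact (memLp_two_iff_integrable_sq hFm).2 hF2
  have hHL : MemLp H (ENNReal.ofReal 2) μ := by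
    rw [show ENNReal.ofReal 2 = 2 by norm_num]
    exact (memLp_two_iff_integrable_sq hHm).2 hH2
  have hCS := MeasureTheory.integral_mul_le_Lp_mul_Lq_of_nonneg hpq
    (Filter.Eventually.of_forall fun x => by positivity)
    (Filter.Eventually.of_forall fun x => by positivity) hFL hHL
  have hFH : ∫ a, F a * H a ∂μ = ∫ y in Set.Ici (0:ℝ), |g y| := by
    refine integral_congr_ae ?_
    filter_upwards [hae] with x hx
    simp only [hF, hH]
    rw [mul_assoc, mul_inv_cancel₀ (hsne x hx), mul_one]
  have hFp : ∫ a, F a ^ (2:ℝ) ∂μ = ∫ x in Set.Ici (0:ℝ), g x ^ 2 * w x := by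
    refine integral_congr_ae ?_
    filter_upwards [hae] with x hx
    have hw := hw1 x hx
    rw [Real.rpow_two]
    simp only [hF, mul_pow, sq_abs, Real.sq_sqrt (by linarith : (0:ℝ) ≤ w x)]
  have hHp : ∫ a, H a ^ (2:ℝ) ∂μ = ∫ x in Set.Ici (0:ℝ), (w x)⁻¹ := by
    refine integral_congr_ae ?_
    filter_upwards [hae] with x hx
    have hw := hw1 x hx
    rw [Real.rpow_two]
    simp only [hH, inv_pow, Real.sq_sqrt (by linarith : (0:ℝ) ≤ w x)]
  rw [hFH, hFp, hHp] at hCS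
  have h1 : (0:ℝ) ≤ ∫ x in Set.Ici (0:ℝ), g x ^ 2 * w x :=
    setIntegral_nonneg measurableSet_Ici fun x hx => by
      have := hw1 x hx; positivity
  have h2 : (0:ℝ) ≤ ∫ x in Set.Ici (0:ℝ), (w x)⁻¹ :=
    setIntegral_nonneg measurableSet_Ici fun x hx => by
      have := hw1 x hx; positivity
  rwa [← Real.sqrt_eq_rpow, ← Real.sqrt_eq_rpow] at hCS

/-- the continuous embedding `U ↪ C¹_b([0,∞))` together with the
`L¹` bounds on the first and second derivatives. -/
theorem stmt_6
    (w : ℝ → ℝ)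
    (hw1 : ∀ x ∈ Set.Ici (0:ℝ), 1 ≤ w x)
    (hwmono : MonotoneOn w (Set.Ici 0))
    (hwC1 : ContDiffOn ℝ 1 w (Set.Ici 0))
    (hw13 : IntegrableOn (fun x => (w x) ^ (-(1/3 : ℝ))) (Set.Ici 0)) :
    ∃ C > 0, ∀ φ d1 d2 : ℝ → ℝ, MemU w φ d1 d2 →
      IntegrableOn d1 (Set.Ici 0) ∧ IntegrableOn d2 (Set.Ici 0) ∧
      ∀ x : ℝ, 0 ≤ x →
        |φ x| + |d1 x| + (∫ y in Set.Ici (0:ℝ), |d1 y|) +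
            (∫ y in Set.Ici (0:ℝ), |d2 y|) ≤
          C * UNorm w φ d1 d2 := by
  have hae : ∀ᵐ x ∂(volume.restrict (Set.Ici (0:ℝ))), x ∈ Set.Ici (0:ℝ) :=
    ae_restrict_mem measurableSet_Ici
  have hwc : ContinuousOn w (Set.Ici 0) := hwC1.continuousOn
  have hwm : AEStronglyMeasurable w (volume.restrict (Set.Ici (0:ℝ))) :=
    hwc.aestronglyMeasurable measurableSet_Ici
  -- integrability of w⁻¹
  have hwinv : IntegrableOn (fun x => (w x)⁻¹) (Set.Ici 0) := by
    refine Integrable.mono' hw13 ?_ ?_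
    · exact (hwc.inv₀ fun x hx => by have := hw1 x hx; positivity).aestronglyMeasurable
        measurableSet_Ici
    · filter_upwards [hae] with x hx
      have hw := hw1 x hx
      rw [Real.norm_eq_abs, abs_of_nonneg (by positivity)]
      calc (w x)⁻¹ = w x ^ (-1 : ℝ) := (Real.rpow_neg_one _).symm
        _ ≤ w x ^ (-(1/3) : ℝ) := Real.rpow_le_rpow_of_exponent_le hw (by norm_num)
  set Bi : ℝ := ∫ x in Set.Ici (0:ℝ), (w x)⁻¹ with hBi
  have hBi0 : 0 ≤ Bi := setIntegral_nonneg measurableSet_Ici fun x hx => by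
    have := hw1 x hx; positivity
  refine ⟨2 + 4 * Real.sqrt Bi, by positivity, ?_⟩
  rintro φ d1 d2 ⟨hφd1, hd1d2, hI⟩
  have hd1m : AEStronglyMeasurable d1 (volume.restrict (Set.Ici (0:ℝ))) :=
    hφd1.1.aestronglyMeasurable
  have hd2m : AEStronglyMeasurable d2 (volume.restrict (Set.Ici (0:ℝ))) :=
    hd1d2.1.aestronglyMeasurable
  have hsq : ∀ (g : ℝ → ℝ), AEStronglyMeasurable g (volume.restrict (Set.Ici (0:ℝ))) →
      (∀ x, g x ^ 2 ≤ d1 x ^ 2 + d2 x ^ 2) →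
      IntegrableOn (fun x => g x ^ 2 * w x) (Set.Ici 0) := by
    intro g hgm hgle
    refine Integrable.mono' hI ?_ ?_
    · have : (fun x => g x ^ 2 * w x) = fun x => g x * g x * w x := by
        funext x; ring
      rw [this]; exact (hgm.mul hgm).mul hwm
    · filter_upwards [hae] with x hx
      have hw := hw1 x hx
      rw [Real.norm_eq_abs, abs_of_nonneg (by positivity)]
      have := hgle x
      nlinarith
  have hd12w := hsq d1 hd1m fun x => by nlinarith [sq_nonneg (d2 x)]
  have hd22w := hsq d2 hd2m fun x => by nlinarith [sq_nonneg (d1 x)]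
  obtain ⟨hint1, hb1⟩ := key_cs w hw1 hwc hwinv d1 hd1m hd12w
  obtain ⟨hint2, hb2⟩ := key_cs w hw1 hwc hwinv d2 hd2m hd22w
  refine ⟨hint1, hint2, ?_⟩
  set I : ℝ := ∫ x in Set.Ici (0:ℝ), (d1 x ^ 2 + d2 x ^ 2) * w x with hIdef
  have hI0 : 0 ≤ I := setIntegral_nonneg measurableSet_Ici fun x hx => by
    have := hw1 x hx; positivity
  set N : ℝ := UNorm w φ d1 d2 with hNdef
  have hNsq : N ^ 2 = φ 0 ^ 2 + d1 0 ^ 2 + I :=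
    Real.sq_sqrt (by positivity)
  have hN0 : 0 ≤ N := Real.sqrt_nonneg _
  have sqrt_le_N : ∀ t : ℝ, t ≤ φ 0 ^ 2 + d1 0 ^ 2 + I → Real.sqrt t ≤ N := by
    intro t ht
    exact Real.sqrt_le_sqrt ht
  have hφ0 : |φ 0| ≤ N := by
    rw [← Real.sqrt_sq_eq_abs]
    exact sqrt_le_N _ (by nlinarith)
  have hd10 : |d1 0| ≤ N := by
    rw [← Real.sqrt_sq_eq_abs]
    exact sqrt_le_N _ (by nlinarith)
  have hIle : ∀ (g : ℝ → ℝ), IntegrableOn (fun x => g x ^ 2 * w x) (Set.Ici 0) →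
      (∀ᵐ x ∂(volume.restrict (Set.Ici (0:ℝ))), g x ^ 2 * w x ≤ (d1 x ^ 2 + d2 x ^ 2) * w x) →
      (∫ x in Set.Ici (0:ℝ), g x ^ 2 * w x) ≤ I :=
    fun g hgint hgle => integral_mono_ae hgint hI hgle
  have hI1 : (∫ x in Set.Ici (0:ℝ), d1 x ^ 2 * w x) ≤ I := by
    refine hIle d1 hd12w ?_
    filter_upwards [hae] with x hx
    have := hw1 x hx
    nlinarith [sq_nonneg (d2 x)]
  have hI2 : (∫ x in Set.Ici (0:ℝ), d2 x ^ 2 * w x) ≤ I := by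
    refine hIle d2 hd22w ?_
    filter_upwards [hae] with x hx
    have := hw1 x hx
    nlinarith [sq_nonneg (d1 x)]
  have hL1 : (∫ y in Set.Ici (0:ℝ), |d1 y|) ≤ Real.sqrt Bi * N := by
    calc (∫ y in Set.Ici (0:ℝ), |d1 y|)
        ≤ Real.sqrt (∫ x in Set.Ici (0:ℝ), d1 x ^ 2 * w x) * Real.sqrt Bi := hb1
      _ ≤ N * Real.sqrt Bi := by
          gcongr
          exact sqrt_le_N _ (by nlinarith)
      _ = Real.sqrt Bi * N := mul_comm _ _
  have hL2 : (∫ y in Set.Ici (0:ℝ), |d2 y|) ≤ Real.sqrt Bi * N := by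
    calc (∫ y in Set.Ici (0:ℝ), |d2 y|)
        ≤ Real.sqrt (∫ x in Set.Ici (0:ℝ), d2 x ^ 2 * w x) * Real.sqrt Bi := hb2
      _ ≤ N * Real.sqrt Bi := by
          gcongr
          exact sqrt_le_N _ (by nlinarith)
      _ = Real.sqrt Bi * N := mul_comm _ _
  intro x hx
  -- interval integral bounds
  have hiv : ∀ (g : ℝ → ℝ), IntegrableOn g (Set.Ici 0) →
      |∫ z in (0:ℝ)..x, g z| ≤ ∫ y in Set.Ici (0:ℝ), |g y| := by
    intro g hgint
    calc |∫ z in (0:ℝ)..x, g z| ≤ ∫ z in (0:ℝ)..x, |g z| :=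
          intervalIntegral.abs_integral_le_integral_abs hx
      _ = ∫ z in Set.Ioc (0:ℝ) x, |g z| := intervalIntegral.integral_of_le hx
      _ ≤ ∫ y in Set.Ici (0:ℝ), |g y| := by
          refine setIntegral_mono_set hgint.abs ?_ ?_
          · filter_upwards [hae] with y _ using abs_nonneg _
          · exact HasSubset.Subset.eventuallyLE (fun y hy => hy.1.le)
  have hφx : |φ x| ≤ |φ 0| + ∫ y in Set.Ici (0:ℝ), |d1 y| := by
    have := hφd1.2 x 0 le_rfl hx
    have h2 := hiv d1 hint1
    calc |φ x| = |φ 0 + ∫ z in (0:ℝ)..x, d1 z| := by rw [show φ x = φ 0 + ∫ z in (0:ℝ)..x, d1 z by linarith]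
      _ ≤ |φ 0| + |∫ z in (0:ℝ)..x, d1 z| := abs_add_le _ _
      _ ≤ _ := by linarith
  have hd1x : |d1 x| ≤ |d1 0| + ∫ y in Set.Ici (0:ℝ), |d2 y| := by
    have := hd1d2.2 x 0 le_rfl hx
    have h2 := hiv d2 hint2
    calc |d1 x| = |d1 0 + ∫ z in (0:ℝ)..x, d2 z| := by rw [show d1 x = d1 0 + ∫ z in (0:ℝ)..x, d2 z by linarith]
      _ ≤ |d1 0| + |∫ z in (0:ℝ)..x, d2 z| := abs_add_le _ _
      _ ≤ _ := by linarith
  linarith [hφx, hd1x, hL1, hL2, hφ0, hd10]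
end

section
/- Let U be the weighted Hilbert space with norm ‖φ‖_U² = |φ(0)|² + |φ'(0)|² + ∫₀^∞ (|φ'|² + |φ''|²) w dx, where w : [0,∞) → [1,∞) is nondecreasing C¹ with w^{-1/3} ∈ L¹. Then the left-shift semigroup (S(t)φ)(x) = φ(t+x) satisfies ‖S(t)φ‖_U ≤ C ‖φ‖_U for a constant C independent of t ≥ 0 and φ ∈ U; i.e., S(t) is a uniformly bounded family of operators on U. -/
open MeasureTheory Set Filter Topology

private lemma cs_int {μ : Measure ℝ} {f g : ℝ → ℝ}
    (hf : AEStronglyMeasurable f μ) (hg : AEStronglyMeasurable g μ)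
    (hf2 : Integrable (fun x => f x ^ 2) μ) (hg2 : Integrable (fun x => g x ^ 2) μ) :
    ∫ x, |f x| * |g x| ∂μ ≤
      Real.sqrt (∫ x, f x ^ 2 ∂μ) * Real.sqrt (∫ x, g x ^ 2 ∂μ) := by
  have h22 : Real.HolderConjugate 2 2 := Real.HolderConjugate.two_two
  have habs : ∀ h : ℝ → ℝ, ∀ x, |h x| ^ (2:ℝ) = h x ^ 2 := by
    intro h x
    rw [show (2:ℝ) = ((2:ℕ):ℝ) by norm_num, Real.rpow_natCast, sq_abs]
  have hfm : MemLp (fun x => |f x|) (ENNReal.ofReal 2) μ := by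
    rw [show ENNReal.ofReal 2 = 2 by simp]
    rw [memLp_two_iff_integrable_sq (by simpa [Real.norm_eq_abs] using hf.norm : AEStronglyMeasurable (fun x => |f x|) μ)]
    simpa [sq_abs] using hf2
  have hgm : MemLp (fun x => |g x|) (ENNReal.ofReal 2) μ := by
    rw [show ENNReal.ofReal 2 = 2 by simp]
    rw [memLp_two_iff_integrable_sq (by simpa [Real.norm_eq_abs] using hg.norm : AEStronglyMeasurable (fun x => |g x|) μ)]
    simpa [sq_abs] using hg2
  have := MeasureTheory.integral_mul_le_Lp_mul_Lq_of_nonneg h22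
    (Filter.Eventually.of_forall fun x => abs_nonneg (f x))
    (Filter.Eventually.of_forall fun x => abs_nonneg (g x)) hfm hgm
  simp only [habs] at this
  calc ∫ x, |f x| * |g x| ∂μ ≤
      (∫ x, f x ^ 2 ∂μ) ^ (1/(2:ℝ)) * (∫ x, g x ^ 2 ∂μ) ^ (1/(2:ℝ)) := this
    _ = _ := by
        rw [← Real.sqrt_eq_rpow, ← Real.sqrt_eq_rpow]

private lemma point_bound {w g F : ℝ → ℝ}
    (hw1 : ∀ x ∈ Ici (0:ℝ), 1 ≤ w x)
    (hw13 : IntegrableOn (fun x => (w x) ^ (-(1/3:ℝ))) (Ici 0))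
    (hwc : ContinuousOn w (Ici 0))
    (hg : LocallyIntegrableOn g (Ici 0))
    (hgF : ∀ x ∈ Ici (0:ℝ), g x ^ 2 * w x ≤ F x)
    (hF : IntegrableOn F (Ici 0))
    (hFpos : ∀ x ∈ Ici (0:ℝ), 0 ≤ F x)
    {t : ℝ} (ht : 0 ≤ t) :
    (∫ z in (0:ℝ)..t, g z) ^ 2 ≤
      (∫ x in Ici (0:ℝ), (w x) ^ (-(1/3:ℝ))) * ∫ x in Ici (0:ℝ), F x := by
  have hsub : Ioc (0:ℝ) t ⊆ Ici 0 := fun x hx => le_of_lt hx.1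
  have hwm : AEStronglyMeasurable w (volume.restrict (Ioc 0 t)) :=
    (hwc.aestronglyMeasurable measurableSet_Ici).mono_measure
      (Measure.restrict_mono hsub le_rfl)
  have hgm : AEStronglyMeasurable g (volume.restrict (Ioc 0 t)) :=
    hg.aestronglyMeasurable.mono_measure (Measure.restrict_mono hsub le_rfl)
  have hw0 : ∀ x ∈ Ioc (0:ℝ) t, 1 ≤ w x := fun x hx => hw1 x (hsub hx)
  -- the two factors
  set f1 : ℝ → ℝ := fun x => g x * Real.sqrt (w x) with hf1
  set f2 : ℝ → ℝ := fun x => (Real.sqrt (w x))⁻¹ with hf2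
  have hf1m : AEStronglyMeasurable f1 (volume.restrict (Ioc 0 t)) :=
    hgm.mul (Real.continuous_sqrt.comp_aestronglyMeasurable hwm)
  have hf2m : AEStronglyMeasurable f2 (volume.restrict (Ioc 0 t)) :=
    (Real.continuous_sqrt.comp_aestronglyMeasurable hwm).aemeasurable.inv.aestronglyMeasurable
  -- integrability of squares
  have haerestrict : ∀ᵐ x ∂(volume.restrict (Ioc (0:ℝ) t)), x ∈ Ioc (0:ℝ) t := ae_restrict_mem measurableSet_Ioc
  have hgwF : ∀ᵐ x ∂(volume.restrict (Ioc 0 t)), g x ^ 2 * w x ≤ F x := by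
    filter_upwards [haerestrict] with x hx using hgF x (hsub hx)
  have hFIoc : Integrable F (volume.restrict (Ioc 0 t)) :=
    (hF.mono_set hsub)
  have hsq1 : Integrable (fun x => f1 x ^ 2) (volume.restrict (Ioc 0 t)) := by
    have : Integrable (fun x => g x ^ 2 * w x) (volume.restrict (Ioc 0 t)) := by
      refine Integrable.mono' hFIoc ((hgm.pow 2).mul hwm) ?_
      filter_upwards [haerestrict] with x hx
      have h1 := hw0 x hx
      have := hgF x (hsub hx)
      rw [Real.norm_eq_abs, abs_of_nonneg (by nlinarith [sq_nonneg (g x)])]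
      exact this
    refine this.congr ?_
    filter_upwards [haerestrict] with x hx
    have h1 := hw0 x hx
    simp only [hf1, mul_pow, Real.sq_sqrt (by linarith : (0:ℝ) ≤ w x)]
  have hw13Ioc : Integrable (fun x => (w x) ^ (-(1/3:ℝ))) (volume.restrict (Ioc 0 t)) :=
    hw13.mono_set hsub
  have hsq2 : Integrable (fun x => f2 x ^ 2) (volume.restrict (Ioc 0 t)) := by
    refine Integrable.mono' hw13Ioc (hf2m.pow 2) ?_
    filter_upwards [haerestrict] with x hx
    have h1 := hw0 x hx
    have hwpos : (0:ℝ) < w x := by linarith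
    have : f2 x ^ 2 = (w x)⁻¹ := by
      simp only [hf2, inv_pow, Real.sq_sqrt hwpos.le]
    rw [Real.norm_eq_abs, this, abs_of_nonneg (inv_nonneg.mpr hwpos.le)]
    rw [← Real.rpow_neg_one (w x)]
    exact Real.rpow_le_rpow_of_exponent_le h1 (by norm_num)
  -- |∫ g| ≤ ∫ |f1|*|f2|
  have key : |∫ z in (0:ℝ)..t, g z| ≤ ∫ x in Ioc (0:ℝ) t, |f1 x| * |f2 x| := by
    rw [intervalIntegral.integral_of_le ht]
    refine le_trans (by simpa [Real.norm_eq_abs] using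
      norm_integral_le_integral_norm (μ := volume.restrict (Ioc 0 t)) g) ?_
    refine le_of_eq (integral_congr_ae ?_)
    filter_upwards [haerestrict] with x hx
    have h1 := hw0 x hx
    have hwpos : (0:ℝ) < Real.sqrt (w x) := Real.sqrt_pos.mpr (by linarith)
    simp only [hf1, hf2, abs_mul, abs_inv, abs_of_pos hwpos]
    field_simp
  have hA0 : 0 ≤ ∫ x in Ioc (0:ℝ) t, f1 x ^ 2 := integral_nonneg fun x => sq_nonneg _
  have hB0 : 0 ≤ ∫ x in Ioc (0:ℝ) t, f2 x ^ 2 := integral_nonneg fun x => sq_nonneg _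
  have hcs := cs_int hf1m hf2m hsq1 hsq2
  -- bound A  by ∫ F over Ici 0
  have hIF : 0 ≤ ∫ x in Ici (0:ℝ), F x :=
    setIntegral_nonneg measurableSet_Ici hFpos
  have hA : (∫ x in Ioc (0:ℝ) t, f1 x ^ 2) ≤ ∫ x in Ici (0:ℝ), F x := by
    refine le_trans (integral_mono_ae hsq1 hFIoc ?_) ?_
    · filter_upwards [haerestrict] with x hx
      have h1 := hw0 x hx
      have := hgF x (hsub hx)
      simp only [hf1, mul_pow, Real.sq_sqrt (by linarith : (0:ℝ) ≤ w x)]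
      exact this
    · refine setIntegral_mono_set hF ?_ (HasSubset.Subset.eventuallyLE hsub)
      filter_upwards [ae_restrict_mem (measurableSet_Ici : MeasurableSet (Ici (0:ℝ)))]
        with x hx using hFpos x hx
  have hM0 : 0 ≤ ∫ x in Ici (0:ℝ), (w x) ^ (-(1/3:ℝ)) := by
    refine setIntegral_nonneg measurableSet_Ici fun x hx => ?_
    exact Real.rpow_nonneg (by linarith [hw1 x hx]) _
  have hB : (∫ x in Ioc (0:ℝ) t, f2 x ^ 2) ≤ ∫ x in Ici (0:ℝ), (w x) ^ (-(1/3:ℝ)) := by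
    refine le_trans (integral_mono_ae hsq2 hw13Ioc ?_) ?_
    · filter_upwards [haerestrict] with x hx
      have h1 := hw0 x hx
      have hwpos : (0:ℝ) < w x := by linarith
      have : f2 x ^ 2 = (w x)⁻¹ := by
        simp only [hf2, inv_pow, Real.sq_sqrt hwpos.le]
      rw [this, ← Real.rpow_neg_one (w x)]
      exact Real.rpow_le_rpow_of_exponent_le h1 (by norm_num)
    · refine setIntegral_mono_set hw13 ?_ (HasSubset.Subset.eventuallyLE hsub)
      filter_upwards [ae_restrict_mem (measurableSet_Ici : MeasurableSet (Ici (0:ℝ)))]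
        with x hx using Real.rpow_nonneg (by linarith [hw1 x hx]) _
  -- put it together
  have habs : |∫ z in (0:ℝ)..t, g z| ≤
      Real.sqrt (∫ x in Ioc (0:ℝ) t, f1 x ^ 2) * Real.sqrt (∫ x in Ioc (0:ℝ) t, f2 x ^ 2) :=
    key.trans hcs
  have := abs_nonneg (∫ z in (0:ℝ)..t, g z)
  calc (∫ z in (0:ℝ)..t, g z) ^ 2 = |∫ z in (0:ℝ)..t, g z| ^ 2 := (sq_abs _).symm
    _ ≤ (Real.sqrt (∫ x in Ioc (0:ℝ) t, f1 x ^ 2) *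
          Real.sqrt (∫ x in Ioc (0:ℝ) t, f2 x ^ 2)) ^ 2 := by
        exact pow_le_pow_left₀ this habs 2
    _ = (∫ x in Ioc (0:ℝ) t, f1 x ^ 2) * (∫ x in Ioc (0:ℝ) t, f2 x ^ 2) := by
        rw [mul_pow, Real.sq_sqrt hA0, Real.sq_sqrt hB0]
    _ ≤ (∫ x in Ici (0:ℝ), F x) * (∫ x in Ici (0:ℝ), (w x) ^ (-(1/3:ℝ))) :=
        mul_le_mul hA hB hB0 hIF
    _ = _ := mul_comm _ _

/-- the shift semigroup `S(t)φ = φ(t + ·)` is uniformly bounded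
on `U`. -/
theorem stmt_7
    (w : ℝ → ℝ)
    (hw1 : ∀ x ∈ Set.Ici (0:ℝ), 1 ≤ w x)
    (hwmono : MonotoneOn w (Set.Ici 0))
    (hwC1 : ContDiffOn ℝ 1 w (Set.Ici 0))
    (hw13 : IntegrableOn (fun x => (w x) ^ (-(1/3 : ℝ))) (Set.Ici 0)) :
    ∃ C > 0, ∀ t : ℝ, 0 ≤ t → ∀ φ d1 d2 : ℝ → ℝ, MemU w φ d1 d2 →
      UNorm w (fun x => φ (t + x)) (fun x => d1 (t + x)) (fun x => d2 (t + x)) ≤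
        C * UNorm w φ d1 d2 := by
  set M := ∫ x in Set.Ici (0:ℝ), (w x) ^ (-(1/3:ℝ)) with hM
  have hwc : ContinuousOn w (Ici 0) := hwC1.continuousOn
  have hM0 : 0 ≤ M := by
    refine setIntegral_nonneg measurableSet_Ici fun x hx => ?_
    exact Real.rpow_nonneg (by linarith [hw1 x hx]) _
  refine ⟨Real.sqrt (4*M + 3), Real.sqrt_pos.mpr (by linarith), ?_⟩
  intro t ht φ d1 d2 hmem
  obtain ⟨⟨hd1loc, hftc⟩, ⟨hd2loc, hd1tc⟩, hF⟩ := hmem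
  set F : ℝ → ℝ := fun x => ((d1 x) ^ 2 + (d2 x) ^ 2) * w x with hFdef
  have hFpos : ∀ x ∈ Ici (0:ℝ), 0 ≤ F x := fun x hx =>
    mul_nonneg (by positivity) (by linarith [hw1 x hx])
  set I := ∫ x in Set.Ici (0:ℝ), F x with hIdef
  have hI0 : 0 ≤ I := setIntegral_nonneg measurableSet_Ici hFpos
  -- pointwise bounds at t
  have hb1 : (φ t - φ 0) ^ 2 ≤ M * I := by
    rw [hftc t 0 le_rfl ht]
    refine point_bound hw1 hw13 hwc hd1loc (fun x hx => ?_) hF hFpos ht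
    show d1 x ^ 2 * w x ≤ (d1 x ^ 2 + d2 x ^ 2) * w x
    nlinarith [sq_nonneg (d2 x), hw1 x hx]
  have hb2 : (d1 t - d1 0) ^ 2 ≤ M * I := by
    rw [hd1tc t 0 le_rfl ht]
    refine point_bound hw1 hw13 hwc hd2loc (fun x hx => ?_) hF hFpos ht
    show d2 x ^ 2 * w x ≤ (d1 x ^ 2 + d2 x ^ 2) * w x
    nlinarith [sq_nonneg (d1 x), hw1 x hx]
  -- translation machinery
  have hemb : MeasurableEmbedding (fun x : ℝ => t + x) :=
    (Homeomorph.addLeft t).measurableEmbedding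
  have hpre : (fun x : ℝ => t + x) ⁻¹' (Ici t) = Ici 0 := by
    ext x; simp
  have hmp : MeasurePreserving (fun x : ℝ => t + x)
      (volume.restrict (Ici 0)) (volume.restrict (Ici t)) := by
    refine ⟨measurable_const_add t, ?_⟩
    rw [← hpre, ← Measure.restrict_map (measurable_const_add t) measurableSet_Ici,
      map_add_left_eq_self volume t]
  have hsubt : Ici t ⊆ Ici (0:ℝ) := Ici_subset_Ici.mpr ht
  have hFt : IntegrableOn F (Ici t) := hF.mono_set hsubt
  have hFcomp : Integrable (F ∘ (fun x : ℝ => t + x)) (volume.restrict (Ici 0)) :=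
    (hmp.integrable_comp_emb hemb).mpr hFt
  have haerestrict : ∀ᵐ x ∂(volume.restrict (Ici (0:ℝ))), x ∈ Ici (0:ℝ) :=
    ae_restrict_mem measurableSet_Ici
  -- measurability of shifted integrand
  have hd1m : AEStronglyMeasurable (fun x => d1 (t + x)) (volume.restrict (Ici 0)) := by
    have : AEStronglyMeasurable d1 (volume.restrict (Ici t)) :=
      hd1loc.aestronglyMeasurable.mono_measure (Measure.restrict_mono hsubt le_rfl)
    exact (hmp.aestronglyMeasurable_comp_iff hemb).mpr this
  have hd2m : AEStronglyMeasurable (fun x => d2 (t + x)) (volume.restrict (Ici 0)) := by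
    have : AEStronglyMeasurable d2 (volume.restrict (Ici t)) :=
      hd2loc.aestronglyMeasurable.mono_measure (Measure.restrict_mono hsubt le_rfl)
    exact (hmp.aestronglyMeasurable_comp_iff hemb).mpr this
  have hwm : AEStronglyMeasurable w (volume.restrict (Ici 0)) :=
    hwc.aestronglyMeasurable measurableSet_Ici
  set G : ℝ → ℝ := fun x => ((d1 (t + x)) ^ 2 + (d2 (t + x)) ^ 2) * w x with hGdef
  have hGm : AEStronglyMeasurable G (volume.restrict (Ici 0)) :=
    ((hd1m.pow 2).add (hd2m.pow 2)).mul hwm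
  have hGbound : ∀ x ∈ Ici (0:ℝ), G x ≤ F (t + x) := by
    intro x hx
    have hx0 : (0:ℝ) ≤ x := hx
    have htx : (0:ℝ) ≤ t + x := by linarith
    have hle : w x ≤ w (t + x) := hwmono hx0 htx (by linarith)
    exact mul_le_mul_of_nonneg_left hle (by positivity)
  have hGpos : ∀ x ∈ Ici (0:ℝ), 0 ≤ G x := fun x hx =>
    mul_nonneg (by positivity) (by linarith [hw1 x hx])
  have hGint : IntegrableOn G (Ici 0) := by
    refine Integrable.mono' hFcomp hGm ?_
    filter_upwards [haerestrict] with x hx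
    rw [Real.norm_eq_abs, abs_of_nonneg (hGpos x hx)]
    exact hGbound x hx
  have hJle : (∫ x in Ici (0:ℝ), G x) ≤ I := by
    have h1 : (∫ x in Ici (0:ℝ), G x) ≤ ∫ x in Ici (0:ℝ), F (t + x) := by
      refine integral_mono_ae hGint hFcomp ?_
      filter_upwards [haerestrict] with x hx using hGbound x hx
    have h2 : (∫ x in Ici (0:ℝ), F (t + x)) = ∫ y in Ici t, F y :=
      hmp.integral_comp hemb F
    have h3 : (∫ y in Ici t, F y) ≤ I := by
      refine setIntegral_mono_set hF ?_ (HasSubset.Subset.eventuallyLE hsubt)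
      filter_upwards [haerestrict] with x hx using hFpos x hx
    calc (∫ x in Ici (0:ℝ), G x) ≤ ∫ x in Ici (0:ℝ), F (t + x) := h1
      _ = ∫ y in Ici t, F y := h2
      _ ≤ I := h3
  -- final assembly
  have hS : (φ (t + 0)) ^ 2 + (d1 (t + 0)) ^ 2 + (∫ x in Ici (0:ℝ), G x) ≤
      (4*M + 3) * ((φ 0) ^ 2 + (d1 0) ^ 2 + I) := by
    rw [add_zero]
    have hJ0 : 0 ≤ ∫ x in Ici (0:ℝ), G x := setIntegral_nonneg measurableSet_Ici hGpos
    nlinarith [hb1, hb2, hJle, hJ0, hM0, hI0, sq_nonneg (2*φ 0 - φ t),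
      sq_nonneg (2*d1 0 - d1 t), mul_nonneg hM0 hI0,
      mul_nonneg hM0 (sq_nonneg (φ 0)), mul_nonneg hM0 (sq_nonneg (d1 0))]
  have hN0 : 0 ≤ (φ 0) ^ 2 + (d1 0) ^ 2 + I := by positivity
  unfold UNorm
  have : ((fun x => φ (t + x)) 0) ^ 2 + ((fun x => d1 (t + x)) 0) ^ 2 +
      (∫ x in Set.Ici (0:ℝ), (((fun x => d1 (t + x)) x) ^ 2 + ((fun x => d2 (t + x)) x) ^ 2) * w x)
      = (φ (t + 0)) ^ 2 + (d1 (t + 0)) ^ 2 + (∫ x in Ici (0:ℝ), G x) := rfl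
  rw [this, ← Real.sqrt_mul (by linarith : (0:ℝ) ≤ 4*M+3)]
  exact Real.sqrt_le_sqrt hS
end

section
/- Let U be the weighted Hilbert space as above, and S(t)φ(x) = φ(t+x) the shift semigroup on U. Then S is strongly continuous: for each φ ∈ U, ‖S(t)φ − φ‖_U → 0 as t → 0⁺. -/
open MeasureTheory Set Filter Topology

lemma weakDeriv_tendsto (f g : ℝ → ℝ) (h : IsWeakDerivOn f g) :
    Tendsto (fun t => f t - f 0) (𝓝[>] (0:ℝ)) (𝓝 0) := by
  have hint : IntegrableOn g (Icc (0:ℝ) 1) := by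
    exact h.1.integrableOn_compact_subset (fun x hx => hx.1) isCompact_Icc
  have hcont := intervalIntegral.continuousOn_primitive (a := (0:ℝ)) (b := 1) hint
  have h0 : (0:ℝ) ∈ Icc (0:ℝ) 1 := by norm_num
  have hcwa := (hcont 0 h0)
  have hF0 : (∫ t in Ioc (0:ℝ) 0, g t) = 0 := by simp
  have h1 : Tendsto (fun x => ∫ t in Ioc (0:ℝ) x, g t) (𝓝[Icc (0:ℝ) 1] 0) (𝓝 0) := by
    simpa [ContinuousWithinAt, hF0] using hcwa
  have h2 : Tendsto (fun x => ∫ t in Ioc (0:ℝ) x, g t) (𝓝[>] (0:ℝ)) (𝓝 0) := by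
    rw [← nhdsWithin_Ioc_eq_nhdsGT (zero_lt_one (α := ℝ))]
    exact h1.mono_left (nhdsWithin_mono _ Ioc_subset_Icc_self)
  refine h2.congr' ?_
  filter_upwards [self_mem_nhdsWithin] with t (ht : 0 < t)
  rw [h.2 t 0 le_rfl ht.le, intervalIntegral.integral_of_le ht.le]

lemma lp_norm_sq_eq (f : ℝ → ℝ) (F : Lp ℝ 2 (volume : Measure ℝ))
    (hF : ⇑F =ᵐ[(volume : Measure ℝ)] f) : ‖F‖ ^ 2 = ∫ x, f x ^ 2 := by
  have h1 : (inner ℝ F F : ℝ) = ‖F‖ ^ 2 := real_inner_self_eq_norm_sq F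
  rw [← h1, L2.inner_def]
  refine integral_congr_ae ?_
  filter_upwards [hF] with x hx
  simp [hx, RCLike.inner_apply, sq]

lemma cont_shift_tendsto (u : ℝ → ℝ) (hc : Continuous u) (hs : HasCompactSupport u) :
    Tendsto (fun t : ℝ => ∫ x, (u (t + x) - u x) ^ 2) (𝓝[>] (0:ℝ)) (𝓝 0) := by
  obtain ⟨C, hC⟩ : ∃ C, ∀ x, |u x| ≤ C := hs.exists_bound_of_continuous hc
  have hC0 : 0 ≤ C := le_trans (abs_nonneg _) (hC 0)
  obtain ⟨R, hR⟩ : ∃ R, tsupport u ⊆ Metric.closedBall 0 R :=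
    hs.isBounded.subset_closedBall 0
  have key : Tendsto (fun t : ℝ => ∫ x, (u (t + x) - u x) ^ 2) (𝓝[>] (0:ℝ))
      (𝓝 (∫ x : ℝ, (0:ℝ))) := by
    apply tendsto_integral_filter_of_dominated_convergence
      (bound := Set.indicator (Icc (-R-1) (R+1)) (fun _ => 4 * C ^ 2))
    · filter_upwards with t
      exact (((hc.comp (continuous_const.add continuous_id)).sub hc).pow 2).aestronglyMeasurable
    · filter_upwards [Ioo_mem_nhdsGT zero_lt_one] with t ht
      filter_upwards with x
      by_cases hx : x ∈ Icc (-R-1) (R+1)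
      · rw [Set.indicator_of_mem hx]
        have h1 : |u (t + x) - u x| ≤ 2 * C := by
          calc |u (t + x) - u x| ≤ |u (t+x)| + |u x| := abs_sub _ _
          _ ≤ 2 * C := by linarith [hC (t+x), hC x]
        calc ‖(u (t + x) - u x) ^ 2‖ = |u (t+x) - u x| ^ 2 := by
              rw [Real.norm_eq_abs, ← abs_pow, abs_of_nonneg (sq_nonneg _)]
        _ ≤ (2*C)^2 := by
              exact pow_le_pow_left₀ (abs_nonneg _) h1 2
        _ = 4 * C^2 := by ring
      · rw [Set.indicator_of_notMem hx]
        have hx1 : x ∉ tsupport u := fun h => by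
          have := hR h
          simp only [Metric.mem_closedBall, Real.dist_eq, sub_zero] at this
          rcases abs_le.1 this with ⟨h1, h2⟩
          exact hx ⟨by linarith, by linarith⟩
        have hx2 : t + x ∉ tsupport u := fun h => by
          have := hR h
          simp only [Metric.mem_closedBall, Real.dist_eq, sub_zero] at this
          rcases abs_le.1 this with ⟨h1, h2⟩
          exact hx ⟨by linarith [ht.1, ht.2], by linarith [ht.1, ht.2]⟩
        rw [image_eq_zero_of_notMem_tsupport hx1, image_eq_zero_of_notMem_tsupport hx2]
        simp
    · rw [integrable_indicator_iff measurableSet_Icc]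
      exact integrableOn_const measure_Icc_lt_top.ne
    · filter_upwards with x
      have : Tendsto (fun t : ℝ => (u (t + x) - u x) ^ 2) (𝓝 0) (𝓝 ((u (0 + x) - u x)^2)) := by
        exact (((hc.comp (continuous_id.add continuous_const)).sub continuous_const).pow 2).tendsto 0
      simpa using this.mono_left nhdsWithin_le_nhds
  simpa using key

noncomputable def Shift (t : ℝ) : Lp ℝ 2 (volume : Measure ℝ) →+ Lp ℝ 2 (volume : Measure ℝ) :=
  Lp.compMeasurePreserving (fun x => t + x) (measurePreserving_add_left volume t)

lemma shift_coe (t : ℝ) (F : Lp ℝ 2 (volume : Measure ℝ)) (f : ℝ → ℝ)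
    (hF : ⇑F =ᵐ[(volume : Measure ℝ)] f) :
    ⇑(Shift t F) =ᵐ[(volume : Measure ℝ)] fun x => f (t + x) := by
  have h1 := Lp.coeFn_compMeasurePreserving F (measurePreserving_add_left volume t)
  refine h1.trans ?_
  exact (measurePreserving_add_left volume t).quasiMeasurePreserving.ae_eq_comp hF

lemma L2_shift_sq_eq (t : ℝ) (h : ℝ → ℝ) (F : Lp ℝ 2 (volume : Measure ℝ))
    (hF : ⇑F =ᵐ[(volume : Measure ℝ)] h) :
    ‖Shift t F - F‖ ^ 2 = ∫ x, (h (t + x) - h x) ^ 2 := by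
  refine lp_norm_sq_eq _ _ ?_
  filter_upwards [Lp.coeFn_sub (Shift t F) F, shift_coe t F h hF, hF] with x h1 h2 h3
  simp only [h1, Pi.sub_apply, h2, h3]

lemma L2_shift (h : ℝ → ℝ) (hh : MemLp h 2 (volume : Measure ℝ)) :
    Tendsto (fun t : ℝ => ∫ x, (h (t + x) - h x) ^ 2) (𝓝[>] (0:ℝ)) (𝓝 0) := by
  set H : Lp ℝ 2 (volume : Measure ℝ) := hh.toLp h with hHdef
  have hHcoe : ⇑H =ᵐ[(volume : Measure ℝ)] h := hh.coeFn_toLp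
  have main : Tendsto (fun t : ℝ => ‖Shift t H - H‖) (𝓝[>] (0:ℝ)) (𝓝 0) := by
    rw [Metric.tendsto_nhds]
    intro ε hε
    obtain ⟨u, hu_supp, hu_close, hu_cont, hu_mem⟩ :=
      hh.exists_hasCompactSupport_eLpNorm_sub_le ENNReal.ofNat_ne_top
        (ε := ENNReal.ofReal (ε/4)) (ENNReal.ofReal_pos.2 (by linarith)).ne'
    set G : Lp ℝ 2 (volume : Measure ℝ) := hu_mem.toLp u with hGdef
    have hGcoe : ⇑G =ᵐ[(volume : Measure ℝ)] u := hu_mem.coeFn_toLp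
    have hHG : ‖H - G‖ ≤ ε/4 := by
      have he : eLpNorm (⇑(H - G)) 2 (volume : Measure ℝ) ≤ ENNReal.ofReal (ε/4) := by
        have : ⇑(H - G) =ᵐ[(volume : Measure ℝ)] h - u :=
          (Lp.coeFn_sub H G).trans (hHcoe.sub hGcoe)
        rw [eLpNorm_congr_ae this]
        exact hu_close
      rw [Lp.norm_def]
      calc (eLpNorm (⇑(H - G)) 2 volume).toReal
          ≤ (ENNReal.ofReal (ε/4)).toReal := ENNReal.toReal_mono ENNReal.ofReal_ne_top he
        _ = ε/4 := ENNReal.toReal_ofReal (by linarith)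
    have hGmid : Tendsto (fun t : ℝ => ‖Shift t G - G‖) (𝓝[>] (0:ℝ)) (𝓝 0) := by
      have h2 := (cont_shift_tendsto u hu_cont hu_supp).sqrt
      rw [Real.sqrt_zero] at h2
      refine h2.congr fun t => ?_
      rw [← L2_shift_sq_eq t u G hGcoe, Real.sqrt_sq (norm_nonneg _)]
    have hev : ∀ᶠ t in 𝓝[>] (0:ℝ), ‖Shift t G - G‖ < ε/2 :=
      hGmid.eventually_lt_const (by linarith)
    filter_upwards [hev] with t ht
    have htri : ‖Shift t H - H‖ ≤ ‖H - G‖ + ‖Shift t G - G‖ + ‖G - H‖ := by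
      have e1 : Shift t H - H = (Shift t H - Shift t G) + ((Shift t G - G) + (G - H)) := by
        abel
      have e2 : ‖Shift t H - Shift t G‖ = ‖H - G‖ := by
        rw [← map_sub (Shift t) H G]
        exact Lp.norm_compMeasurePreserving (H - G) _
      calc ‖Shift t H - H‖ ≤ ‖Shift t H - Shift t G‖ + ‖(Shift t G - G) + (G - H)‖ := by
            rw [e1]; exact norm_add_le _ _
        _ ≤ ‖Shift t H - Shift t G‖ + (‖Shift t G - G‖ + ‖G - H‖) := by
            gcongr; exact norm_add_le _ _
        _ = ‖H - G‖ + ‖Shift t G - G‖ + ‖G - H‖ := by rw [e2]; ring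
    have hGH : ‖G - H‖ ≤ ε/4 := by rw [norm_sub_rev]; exact hHG
    have : ‖Shift t H - H‖ < ε := by linarith
    simpa [Real.dist_eq, abs_of_nonneg (norm_nonneg _)] using this
  have sq0 : Tendsto (fun t : ℝ => ‖Shift t H - H‖ ^ 2) (𝓝[>] (0:ℝ)) (𝓝 0) := by
    simpa using main.pow 2
  refine sq0.congr fun t => L2_shift_sq_eq t h H hHcoe

lemma core_integrable (W g : ℝ → ℝ) (hW1 : ∀ x, 1 ≤ W x) (hWm : Monotone W)
    (hWc : Continuous W) (hg : AEStronglyMeasurable g (volume : Measure ℝ))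
    (hgW : Integrable (fun x => g x ^ 2 * W x) (volume : Measure ℝ)) (t : ℝ) (ht : 0 ≤ t) :
    IntegrableOn (fun x => (g (t + x) - g x) ^ 2 * W x) (Ici 0) volume := by
  have hgt : AEStronglyMeasurable (fun x => g (t + x)) (volume : Measure ℝ) :=
    hg.comp_quasiMeasurePreserving (measurePreserving_add_left volume t).quasiMeasurePreserving
  have hshift : Integrable (fun x => g (t + x) ^ 2 * W (t + x)) (volume : Measure ℝ) :=
    hgW.comp_add_left t
  have hWm' : AEStronglyMeasurable W (volume : Measure ℝ) := hWc.aestronglyMeasurable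
  refine Integrable.mono'
    (((hshift.const_mul 2).add (hgW.const_mul 2)).integrableOn) ?_ ?_
  · refine (((hgt.sub hg).mul (hgt.sub hg)).mul hWm').congr ?_ |>.restrict
    exact Eventually.of_forall fun x => by simp only [Pi.mul_apply, Pi.sub_apply]; ring
  · filter_upwards [ae_restrict_mem measurableSet_Ici] with x (hx : (0:ℝ) ≤ x)
    have hWle : W x ≤ W (t + x) := hWm (le_add_of_nonneg_left ht)
    have hW0 : (0:ℝ) < W x := lt_of_lt_of_le zero_lt_one (hW1 x)
    rw [Real.norm_eq_abs, abs_of_nonneg (by positivity)]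
    have key : (g (t + x) - g x) ^ 2 * W x ≤ 2 * (g (t + x) ^ 2 * W x) + 2 * (g x ^ 2 * W x) := by
      have h1 : (g (t + x) - g x) ^ 2 ≤ 2 * g (t + x) ^ 2 + 2 * g x ^ 2 := by
        nlinarith [sq_nonneg (g (t + x) + g x)]
      nlinarith [mul_le_mul_of_nonneg_right h1 hW0.le]
    have h2 : g (t + x) ^ 2 * W x ≤ g (t + x) ^ 2 * W (t + x) :=
      mul_le_mul_of_nonneg_left hWle (sq_nonneg _)
    simp only [Pi.add_apply]
    linarith

lemma core_tendsto (W g : ℝ → ℝ) (hW1 : ∀ x, 1 ≤ W x) (hWm : Monotone W)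
    (hWc : Continuous W) (hg : AEStronglyMeasurable g (volume : Measure ℝ))
    (hgW : Integrable (fun x => g x ^ 2 * W x) (volume : Measure ℝ)) :
    Tendsto (fun t => ∫ x in Ici (0:ℝ), (g (t + x) - g x) ^ 2 * W x) (𝓝[>] (0:ℝ)) (𝓝 0) := by
  have hW0 : ∀ x, (0:ℝ) < W x := fun x => lt_of_lt_of_le zero_lt_one (hW1 x)
  set h : ℝ → ℝ := fun y => g y * Real.sqrt (W y) with hdef
  have h_sq : ∀ y, h y ^ 2 = g y ^ 2 * W y := fun y => by
    rw [hdef, mul_pow, Real.sq_sqrt (hW0 y).le]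
  have hsqrtW : Continuous fun y => Real.sqrt (W y) := Real.continuous_sqrt.comp hWc
  have hhm : AEStronglyMeasurable h (volume : Measure ℝ) := hg.mul hsqrtW.aestronglyMeasurable
  have hmem : MemLp h 2 (volume : Measure ℝ) := by
    refine (memLp_two_iff_integrable_sq hhm).2 (hgW.congr ?_)
    exact Eventually.of_forall fun y => (h_sq y).symm
  have hmem_t : ∀ t : ℝ, MemLp (fun x => h (t + x)) 2 (volume : Measure ℝ) := fun t =>
    hmem.comp_measurePreserving (measurePreserving_add_left volume t)
  have hdiff_int : ∀ t : ℝ, Integrable (fun x => (h (t + x) - h x) ^ 2) (volume : Measure ℝ) := by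
    intro t
    have := ((hmem_t t).sub hmem).integrable_sq
    refine this.congr (Eventually.of_forall fun x => ?_)
    simp [Pi.sub_apply]
  -- the B part
  have hB : Tendsto (fun t => ∫ x in Ici (0:ℝ), (h (t + x) - h x) ^ 2) (𝓝[>] (0:ℝ)) (𝓝 0) := by
    have hC := L2_shift h hmem
    refine tendsto_of_tendsto_of_tendsto_of_le_of_le tendsto_const_nhds hC ?_ ?_
    · exact fun t => setIntegral_nonneg measurableSet_Ici fun x _ => sq_nonneg _
    · exact fun t => setIntegral_le_integral (hdiff_int t)
        (Eventually.of_forall fun x => sq_nonneg _)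
  -- the A part
  set Φ : ℝ → ℝ → ℝ := fun t y => g y ^ 2 * (Real.sqrt (W y) - Real.sqrt (W (y - t))) ^ 2
    with hΦdef
  have hg2 : AEStronglyMeasurable (fun y => g y ^ 2) (volume : Measure ℝ) :=
    (hg.mul hg).congr (Eventually.of_forall fun y => (pow_two (g y)).symm)
  have hΦc : ∀ t : ℝ, Continuous fun y => (Real.sqrt (W y) - Real.sqrt (W (y - t))) ^ 2 :=
    fun t => (hsqrtW.sub (hsqrtW.comp (continuous_id.sub continuous_const))).pow 2
  have hΦm : ∀ t : ℝ, AEStronglyMeasurable (Φ t) (volume : Measure ℝ) := fun t =>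
    hg2.mul (hΦc t).aestronglyMeasurable
  have hΦ_nonneg : ∀ t y, 0 ≤ Φ t y := fun t y => by positivity
  have hΦ_bound : ∀ t y, 0 ≤ t → Φ t y ≤ g y ^ 2 * W y := by
    intro t y ht
    have h1 : Real.sqrt (W (y - t)) ≤ Real.sqrt (W y) :=
      Real.sqrt_le_sqrt (hWm (by linarith))
    have h2 : (0:ℝ) ≤ Real.sqrt (W (y - t)) := Real.sqrt_nonneg _
    have h3 : (Real.sqrt (W y) - Real.sqrt (W (y - t))) ^ 2 ≤ W y := by
      have h4 : (Real.sqrt (W y) - Real.sqrt (W (y - t))) ^ 2 ≤ Real.sqrt (W y) ^ 2 := by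
        apply sq_le_sq'
        · nlinarith [Real.sqrt_nonneg (W y)]
        · linarith
      rwa [Real.sq_sqrt (hW0 y).le] at h4
    exact mul_le_mul_of_nonneg_left h3 (sq_nonneg _)
  have hA : Tendsto (fun t => ∫ y, indicator (Ici t) (Φ t) y) (𝓝[>] (0:ℝ)) (𝓝 0) := by
    have key : Tendsto (fun t => ∫ y, indicator (Ici t) (Φ t) y) (𝓝[>] (0:ℝ))
        (𝓝 (∫ _ : ℝ, (0:ℝ))) := by
      apply tendsto_integral_filter_of_dominated_convergence (bound := fun y => g y ^ 2 * W y)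
      · exact Eventually.of_forall fun t => (hΦm t).indicator measurableSet_Ici
      · filter_upwards [self_mem_nhdsWithin] with t (ht : 0 < t)
        filter_upwards with y
        by_cases hy : y ∈ Ici t
        · rw [indicator_of_mem hy, Real.norm_eq_abs, abs_of_nonneg (hΦ_nonneg t y)]
          exact hΦ_bound t y ht.le
        · rw [indicator_of_notMem hy]
          simp only [norm_zero]
          exact mul_nonneg (sq_nonneg _) (hW0 y).le
      · exact hgW
      · have hae : ∀ᵐ y : ℝ ∂(volume : Measure ℝ), y ≠ 0 := by
          rw [ae_iff]
          simp only [ne_eq, not_not, Set.setOf_eq_eq_singleton]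
          exact Real.volume_singleton
        filter_upwards [hae] with y hy
        rcases hy.lt_or_gt with hy' | hy'
        · refine Tendsto.congr' ?_ tendsto_const_nhds
          filter_upwards [self_mem_nhdsWithin] with t (ht : 0 < t)
          rw [indicator_of_notMem (by simp only [mem_Ici, not_le]; linarith)]
        · have hcont : Tendsto (fun t : ℝ => Φ t y) (𝓝 0) (𝓝 (Φ 0 y)) := by
            have : Continuous fun t : ℝ => Φ t y := by
              exact continuous_const.mul
                ((continuous_const.sub (hsqrtW.comp (continuous_const.sub continuous_id))).pow 2)
            exact this.tendsto 0
          have hΦ0 : Φ 0 y = 0 := by simp [hΦdef]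
          rw [hΦ0] at hcont
          refine Tendsto.congr' ?_ (hcont.mono_left nhdsWithin_le_nhds)
          filter_upwards [Ioo_mem_nhdsGT hy'] with t ht
          rw [indicator_of_mem (by exact mem_Ici.2 ht.2.le)]
    simpa using key
  -- change of variables for the A part
  have hchange : ∀ t : ℝ, (∫ x in Ici (0:ℝ), Φ t (t + x)) = ∫ y, indicator (Ici t) (Φ t) y := by
    intro t
    rw [← integral_indicator measurableSet_Ici]
    rw [← integral_add_left_eq_self (fun y => indicator (Ici t) (Φ t) y) t]
    congr 1
    ext x
    by_cases hx : (0:ℝ) ≤ x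
    · rw [indicator_of_mem (mem_Ici.2 hx), indicator_of_mem (mem_Ici.2 (le_add_of_nonneg_right hx))]
    · rw [indicator_of_notMem (by simpa [mem_Ici] using hx),
        indicator_of_notMem (by simp only [mem_Ici, le_add_iff_nonneg_right]; exact hx)]
  have hA' : Tendsto (fun t => ∫ x in Ici (0:ℝ), Φ t (t + x)) (𝓝[>] (0:ℝ)) (𝓝 0) := by
    refine hA.congr fun t => (hchange t).symm
  -- integrability of the A integrand
  have hΦt_int : ∀ t : ℝ, 0 ≤ t → IntegrableOn (fun x => Φ t (t + x)) (Ici 0) volume := by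
    intro t ht
    have hm : AEStronglyMeasurable (fun x => Φ t (t + x)) (volume : Measure ℝ) :=
      (hΦm t).comp_quasiMeasurePreserving
        (measurePreserving_add_left volume t).quasiMeasurePreserving
    refine Integrable.mono' ((hmem_t t).integrable_sq.integrableOn) hm.restrict ?_
    filter_upwards [ae_restrict_mem measurableSet_Ici] with x (hx : (0:ℝ) ≤ x)
    rw [Real.norm_eq_abs, abs_of_nonneg (hΦ_nonneg t _), h_sq]
    exact hΦ_bound t (t + x) ht
  -- main squeeze
  have hupper : Tendsto (fun t => 2 * (∫ x in Ici (0:ℝ), (h (t + x) - h x) ^ 2)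
      + 2 * (∫ x in Ici (0:ℝ), Φ t (t + x))) (𝓝[>] (0:ℝ)) (𝓝 0) := by
    have := (hB.const_mul 2).add (hA'.const_mul 2)
    simpa using this
  refine tendsto_of_tendsto_of_tendsto_of_le_of_le' tendsto_const_nhds hupper ?_ ?_
  · filter_upwards with t
    exact setIntegral_nonneg measurableSet_Ici fun x _ =>
      mul_nonneg (sq_nonneg _) (hW0 x).le
  · filter_upwards [self_mem_nhdsWithin] with t (ht : 0 < t)
    have step1 : (∫ x in Ici (0:ℝ), (g (t + x) - g x) ^ 2 * W x)
        ≤ ∫ x in Ici (0:ℝ), (2 * (h (t + x) - h x) ^ 2 + 2 * Φ t (t + x)) := by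
      refine integral_mono_of_nonneg ?_ ?_ ?_
      · exact Eventually.of_forall fun x => mul_nonneg (sq_nonneg _) (hW0 x).le
      · exact ((hdiff_int t).integrableOn.const_mul 2).add ((hΦt_int t ht.le).const_mul 2)
      · filter_upwards [ae_restrict_mem measurableSet_Ici] with x (hx : (0:ℝ) ≤ x)
        have e1 : Φ t (t + x) = (g (t + x) * (Real.sqrt (W (t + x)) - Real.sqrt (W x))) ^ 2 := by
          simp only [hΦdef, add_sub_cancel_left, mul_pow]
        have e2 : (g (t + x) - g x) ^ 2 * W x
            = ((g (t + x) - g x) * Real.sqrt (W x)) ^ 2 := by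
          rw [mul_pow, Real.sq_sqrt (hW0 x).le]
        set a := h (t + x) - h x with ha
        set b := g (t + x) * (Real.sqrt (W (t + x)) - Real.sqrt (W x)) with hb
        have e3 : (g (t + x) - g x) * Real.sqrt (W x) = a - b := by
          rw [ha, hb, hdef]; ring
        rw [e1, e2, e3]
        nlinarith [sq_nonneg (a + b)]
    have step2 : (∫ x in Ici (0:ℝ), (2 * (h (t + x) - h x) ^ 2 + 2 * Φ t (t + x)))
        = 2 * (∫ x in Ici (0:ℝ), (h (t + x) - h x) ^ 2)
          + 2 * (∫ x in Ici (0:ℝ), Φ t (t + x)) := by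
      rw [integral_add ((hdiff_int t).integrableOn.const_mul 2)
        ((hΦt_int t ht.le).const_mul 2), integral_const_mul, integral_const_mul]
    calc (∫ x in Ici (0:ℝ), (g (t + x) - g x) ^ 2 * W x)
        ≤ _ := step1
      _ = _ := step2

/-- strong continuity of the shift semigroup on `U`:
`‖S(t)φ − φ‖_U → 0` as `t → 0⁺`. -/
theorem stmt_8
    (w : ℝ → ℝ)
    (hw1 : ∀ x ∈ Set.Ici (0:ℝ), 1 ≤ w x)
    (hwmono : MonotoneOn w (Set.Ici 0))
    (hwC1 : ContDiffOn ℝ 1 w (Set.Ici 0))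
    (hw13 : IntegrableOn (fun x => (w x) ^ (-(1/3 : ℝ))) (Set.Ici 0))
    (φ d1 d2 : ℝ → ℝ) (hφ : MemU w φ d1 d2) :
    Tendsto (fun t =>
        UNorm w (fun x => φ (t + x) - φ x) (fun x => d1 (t + x) - d1 x)
          (fun x => d2 (t + x) - d2 x))
      (𝓝[>] (0:ℝ)) (𝓝 0) := by
  obtain ⟨hwd1, hwd2, hInt⟩ := hφ
  -- the extended weight
  set W : ℝ → ℝ := fun x => w (max x 0) with hWdef
  have hWeq : ∀ x : ℝ, 0 ≤ x → W x = w x := fun x hx => by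
    rw [hWdef]; simp [max_eq_left hx]
  have hW1 : ∀ x, 1 ≤ W x := fun x => hw1 _ (mem_Ici.2 (le_max_right x 0))
  have hWm : Monotone W := fun x y hxy =>
    hwmono (mem_Ici.2 (le_max_right x 0)) (mem_Ici.2 (le_max_right y 0))
      (max_le_max hxy le_rfl)
  have hWc : Continuous W :=
    hwC1.continuousOn.comp_continuous (continuous_id.max continuous_const)
      fun x => mem_Ici.2 (le_max_right x 0)
  -- measurability
  have meas_d1 : AEStronglyMeasurable d1 (volume.restrict (Ici 0)) :=
    hwd1.1.aestronglyMeasurable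
  have meas_d2 : AEStronglyMeasurable d2 (volume.restrict (Ici 0)) :=
    hwd2.1.aestronglyMeasurable
  have meas_w : AEStronglyMeasurable w (volume.restrict (Ici 0)) :=
    hwC1.continuousOn.aestronglyMeasurable measurableSet_Ici
  -- integrability of the separate pieces
  have hIntPiece : ∀ (d : ℝ → ℝ), AEStronglyMeasurable d (volume.restrict (Ici 0)) →
      (∀ᵐ x ∂(volume.restrict (Ici (0:ℝ))), d x ^ 2 ≤ d1 x ^ 2 + d2 x ^ 2) →
      IntegrableOn (fun x => d x ^ 2 * w x) (Ici 0) := by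
    intro d hd hb
    refine Integrable.mono' hInt (((hd.mul hd).mul meas_w).congr ?_) ?_
    · exact Eventually.of_forall fun x => by simp only [Pi.mul_apply]; ring
    · filter_upwards [ae_restrict_mem measurableSet_Ici, hb] with x hx hbx
      have hw0 : (0:ℝ) < w x := lt_of_lt_of_le zero_lt_one (hw1 x hx)
      rw [Real.norm_eq_abs, abs_of_nonneg (by positivity)]
      nlinarith [sq_nonneg (d1 x), sq_nonneg (d2 x)]
  have hInt1 : IntegrableOn (fun x => d1 x ^ 2 * w x) (Ici 0) :=
    hIntPiece d1 meas_d1 (Eventually.of_forall fun x => by nlinarith [sq_nonneg (d2 x)])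
  have hInt2 : IntegrableOn (fun x => d2 x ^ 2 * w x) (Ici 0) :=
    hIntPiece d2 meas_d2 (Eventually.of_forall fun x => by nlinarith [sq_nonneg (d1 x)])
  -- the extended functions
  set g1 : ℝ → ℝ := indicator (Ici 0) d1 with hg1def
  set g2 : ℝ → ℝ := indicator (Ici 0) d2 with hg2def
  have hg1m : AEStronglyMeasurable g1 (volume : Measure ℝ) :=
    (aestronglyMeasurable_indicator_iff measurableSet_Ici).2 meas_d1
  have hg2m : AEStronglyMeasurable g2 (volume : Measure ℝ) :=
    (aestronglyMeasurable_indicator_iff measurableSet_Ici).2 meas_d2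
  have hgW : ∀ (d : ℝ → ℝ), IntegrableOn (fun x => d x ^ 2 * w x) (Ici 0) →
      Integrable (fun x => (indicator (Ici 0) d) x ^ 2 * W x) (volume : Measure ℝ) := by
    intro d hd
    have heq : (fun x => (indicator (Ici 0) d) x ^ 2 * W x)
        = indicator (Ici 0) (fun x => d x ^ 2 * w x) := by
      funext x
      by_cases hx : x ∈ Ici (0:ℝ)
      · rw [indicator_of_mem hx, indicator_of_mem hx, hWeq x hx]
      · rw [indicator_of_notMem hx, indicator_of_notMem hx]
        ring
    rw [heq, integrable_indicator_iff measurableSet_Ici]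
    exact hd
  have hgW1 := hgW d1 hInt1
  have hgW2 := hgW d2 hInt2
  rw [← hg1def] at hgW1
  rw [← hg2def] at hgW2
  -- core tendsto results
  have T1 := core_tendsto W g1 hW1 hWm hWc hg1m hgW1
  have T2 := core_tendsto W g2 hW1 hWm hWc hg2m hgW2
  -- the integral part
  have hI : Tendsto (fun t => ∫ x in Ici (0:ℝ),
      ((d1 (t + x) - d1 x) ^ 2 + (d2 (t + x) - d2 x) ^ 2) * w x) (𝓝[>] (0:ℝ)) (𝓝 0) := by
    have hsum : Tendsto (fun t => (∫ x in Ici (0:ℝ), (g1 (t + x) - g1 x) ^ 2 * W x)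
        + ∫ x in Ici (0:ℝ), (g2 (t + x) - g2 x) ^ 2 * W x) (𝓝[>] (0:ℝ)) (𝓝 0) := by
      simpa using T1.add T2
    refine Tendsto.congr' ?_ hsum
    filter_upwards [self_mem_nhdsWithin] with t (ht : 0 < t)
    rw [← integral_add (core_integrable W g1 hW1 hWm hWc hg1m hgW1 t ht.le)
      (core_integrable W g2 hW1 hWm hWc hg2m hgW2 t ht.le)]
    refine setIntegral_congr_fun measurableSet_Ici fun x hx => ?_
    have hx' : (0:ℝ) ≤ x := hx
    have htx : (0:ℝ) ≤ t + x := by linarith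
    rw [hg1def, hg2def]
    rw [indicator_of_mem (mem_Ici.2 htx), indicator_of_mem (mem_Ici.2 hx'),
      indicator_of_mem (mem_Ici.2 htx), indicator_of_mem (mem_Ici.2 hx'), hWeq x hx']
    ring
  -- the pointwise parts
  have TA := weakDeriv_tendsto φ d1 hwd1
  have TB := weakDeriv_tendsto d1 d2 hwd2
  have hE : Tendsto (fun t => (φ t - φ 0) ^ 2 + (d1 t - d1 0) ^ 2
      + ∫ x in Ici (0:ℝ), ((d1 (t + x) - d1 x) ^ 2 + (d2 (t + x) - d2 x) ^ 2) * w x)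
      (𝓝[>] (0:ℝ)) (𝓝 0) := by
    have h1 : Tendsto (fun t => (φ t - φ 0) ^ 2) (𝓝[>] (0:ℝ)) (𝓝 0) := by
      simpa using TA.pow 2
    have h2 : Tendsto (fun t => (d1 t - d1 0) ^ 2) (𝓝[>] (0:ℝ)) (𝓝 0) := by
      simpa using TB.pow 2
    simpa using (h1.add h2).add hI
  have := (Real.continuous_sqrt.tendsto' 0 0 Real.sqrt_zero).comp hE
  simp only [UNorm]
  simpa [Function.comp_def, add_zero] using this
end

section
/- Let U be the weighted Hilbert space as above. There is a constant C such that for every φ ∈ U with lim_{x→∞} φ(x) = 0, the function Sφ(x) := φ(x) ∫₀ˣ φ(y) dy belongs to U and ‖Sφ‖_U ≤ C ‖φ‖_U². -/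
open MeasureTheory Set Filter Topology

/-- AM-GM optimization: if `X ≤ (t*M + A/t)/2` for all `t > 0`, then `X ≤ √(A*M)`. -/
lemma amgm_opt {X A M : ℝ} (hA : 0 ≤ A) (hM : 0 ≤ M)
    (h : ∀ t : ℝ, 0 < t → X ≤ (t * M + A / t) / 2) : X ≤ Real.sqrt (A * M) := by
  rcases eq_or_lt_of_le hM with hM0 | hM0
  · rw [← hM0, mul_zero, Real.sqrt_zero]
    refine le_of_forall_pos_le_add fun ε hε => ?_
    have ht : (0:ℝ) < A / ε + 1 := by positivity
    have := h _ ht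
    rw [← hM0] at this
    have hle : A / (A / ε + 1) ≤ ε := by
      rw [div_le_iff₀ ht]
      nlinarith [div_mul_cancel₀ A hε.ne']
    nlinarith [this, hle]
  · rcases eq_or_lt_of_le hA with hA0 | hA0
    · rw [← hA0, zero_mul, Real.sqrt_zero]
      refine le_of_forall_pos_le_add fun ε hε => ?_
      have ht : (0:ℝ) < 2 * ε / M := by positivity
      have := h _ ht
      rw [← hA0] at this
      simp only [zero_div] at this
      calc X ≤ (2 * ε / M * M + 0) / 2 := this
        _ = ε := by field_simp; ring
        _ ≤ 0 + ε := by linarith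
    · have hs : (0:ℝ) < Real.sqrt A / Real.sqrt M := by positivity
      have := h _ hs
      have e1 : Real.sqrt A / Real.sqrt M * M = Real.sqrt (A * M) := by
        rw [Real.sqrt_mul hA]
        rw [div_mul_eq_mul_div, div_eq_iff (Real.sqrt_pos.mpr hM0).ne']
        nlinarith [Real.sq_sqrt hM, Real.sqrt_nonneg M, Real.sqrt_nonneg A]
      have e2 : A / (Real.sqrt A / Real.sqrt M) = Real.sqrt (A * M) := by
        rw [Real.sqrt_mul hA, div_div_eq_mul_div, div_eq_iff (Real.sqrt_pos.mpr hA0).ne']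
        nlinarith [Real.sq_sqrt hA, Real.sqrt_nonneg M, Real.sqrt_nonneg A]
      rw [e1, e2] at this
      linarith

lemma triangle_swap {f g : ℝ → ℝ} {y x : ℝ}
    (hf : IntegrableOn f (Ioc y x)) (hg : IntegrableOn g (Ioc y x)) :
    ∫ t in Ioc y x, f t * ∫ s in Ioc y t, g s
      = ∫ s in Ioc y x, g s * ∫ t in Icc s x, f t := by
  set μ := volume.restrict (Ioc y x) with hμ
  have hS : MeasurableSet {q : ℝ × ℝ | q.2 ≤ q.1} := measurableSet_le measurable_snd measurable_fst
  set k : ℝ → ℝ → ℝ := fun t s => {q : ℝ × ℝ | q.2 ≤ q.1}.indicator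
    (fun q => f q.1 * g q.2) (t, s) with hk
  have hFint : Integrable (fun q : ℝ × ℝ => f q.1 * g q.2) (μ.prod μ) := hf.mul_prod hg
  have hKint : Integrable (Function.uncurry k) (μ.prod μ) := by
    have : Function.uncurry k = {q : ℝ × ℝ | q.2 ≤ q.1}.indicator (fun q => f q.1 * g q.2) := by
      ext ⟨t, s⟩; rfl
    rw [this]
    exact hFint.indicator hS
  have hswap : ∫ t, (∫ s, k t s ∂μ) ∂μ = ∫ s, (∫ t, k t s ∂μ) ∂μ :=
    integral_integral_swap hKint
  have hL : ∫ t, (∫ s, k t s ∂μ) ∂μ = ∫ t in Ioc y x, f t * ∫ s in Ioc y t, g s := by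
    refine setIntegral_congr_fun measurableSet_Ioc fun t ht => ?_
    have h1 : (fun s => k t s) = (Iic t).indicator (fun s => f t * g s) := by
      ext s
      by_cases hst : s ≤ t
      · simp [hk, Set.indicator_of_mem, hst, Set.mem_setOf_eq, Set.mem_Iic]
      · simp [hk, Set.indicator_of_notMem, hst, Set.mem_setOf_eq, Set.mem_Iic]
    rw [h1, hμ, integral_indicator measurableSet_Iic, Measure.restrict_restrict measurableSet_Iic]
    have h2 : Iic t ∩ Ioc y x = Ioc y t := by
      ext s; simp only [mem_inter_iff, mem_Iic, mem_Ioc]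
      exact ⟨fun ⟨a, b, _⟩ => ⟨b, a⟩, fun ⟨a, b⟩ => ⟨b, a, b.trans ht.2⟩⟩
    rw [h2, MeasureTheory.integral_const_mul]
  have hR : ∫ s, (∫ t, k t s ∂μ) ∂μ = ∫ s in Ioc y x, g s * ∫ t in Icc s x, f t := by
    refine setIntegral_congr_fun measurableSet_Ioc fun s hs => ?_
    have h1 : (fun t => k t s) = (Ici s).indicator (fun t => f t * g s) := by
      ext t
      by_cases hst : s ≤ t
      · simp [hk, Set.indicator_of_mem, hst, Set.mem_setOf_eq, Set.mem_Ici]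
      · simp [hk, Set.indicator_of_notMem, hst, Set.mem_setOf_eq, Set.mem_Ici]
    rw [h1, hμ, integral_indicator measurableSet_Ici, Measure.restrict_restrict measurableSet_Ici]
    have h2 : Ici s ∩ Ioc y x = Icc s x := by
      ext t; simp only [mem_inter_iff, mem_Ici, mem_Ioc, mem_Icc]
      exact ⟨fun ⟨a, _, c⟩ => ⟨a, c⟩, fun ⟨a, b⟩ => ⟨a, lt_of_lt_of_le hs.1 a, b⟩⟩
    rw [h2]
    rw [show (fun t => f t * g s) = fun t => g s * f t from funext fun t => mul_comm _ _,
      MeasureTheory.integral_const_mul]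
  rw [← hL, ← hR] at *
  exact hswap

lemma bdd_mul_int {g Q : ℝ → ℝ} {y x B : ℝ} (hg : IntegrableOn g (Ioc y x))
    (hQm : AEStronglyMeasurable Q (volume.restrict (Ioc y x)))
    (hQb : ∀ z ∈ Ioc y x, |Q z| ≤ B) :
    IntegrableOn (fun z => Q z * g z) (Ioc y x) := by
  refine Integrable.mono' (hg.abs.const_mul B) (hQm.mul hg.aestronglyMeasurable) ?_
  filter_upwards [ae_restrict_mem measurableSet_Ioc] with z hz
  rw [Real.norm_eq_abs, abs_mul]
  exact mul_le_mul_of_nonneg_right (hQb z hz) (abs_nonneg _)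

lemma ftc_mul {F G f g : ℝ → ℝ}
    (hf : LocallyIntegrableOn f (Ici 0)) (hg : LocallyIntegrableOn g (Ici 0))
    (hF : ∀ x y : ℝ, 0 ≤ y → y ≤ x → F x - F y = ∫ z in y..x, f z)
    (hG : ∀ x y : ℝ, 0 ≤ y → y ≤ x → G x - G y = ∫ z in y..x, g z)
    {x y : ℝ} (hy : 0 ≤ y) (hyx : y ≤ x) :
    F x * G x - F y * G y = ∫ z in y..x, (f z * G z + F z * g z) := by
  have hIcc : Icc y x ⊆ Ici 0 := fun z hz => le_trans hy hz.1
  have hfI : IntegrableOn f (Icc y x) := hf.integrableOn_compact_subset hIcc isCompact_Icc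
  have hgI : IntegrableOn g (Icc y x) := hg.integrableOn_compact_subset hIcc isCompact_Icc
  have hfO : IntegrableOn f (Ioc y x) := hfI.mono_set Ioc_subset_Icc_self
  have hgO : IntegrableOn g (Ioc y x) := hgI.mono_set Ioc_subset_Icc_self
  set P : ℝ → ℝ := fun z => ∫ s in Ioc y z, f s with hPdef
  set Q : ℝ → ℝ := fun z => ∫ s in Ioc y z, g s with hQdef
  -- continuity / measurability of the primitives
  have hPc : ContinuousOn P (Icc y x) := intervalIntegral.continuousOn_primitive hfI
  have hQc : ContinuousOn Q (Icc y x) := intervalIntegral.continuousOn_primitive hgI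
  have hPm : AEStronglyMeasurable P (volume.restrict (Ioc y x)) :=
    (hPc.aestronglyMeasurable measurableSet_Icc).mono_measure
      (Measure.restrict_mono Ioc_subset_Icc_self le_rfl)
  have hQm : AEStronglyMeasurable Q (volume.restrict (Ioc y x)) :=
    (hQc.aestronglyMeasurable measurableSet_Icc).mono_measure
      (Measure.restrict_mono Ioc_subset_Icc_self le_rfl)
  -- bounds on the primitives
  have hPb : ∀ z ∈ Ioc y x, |P z| ≤ ∫ s in Ioc y x, |f s| := by
    intro z hz
    refine le_trans (by simpa [Real.norm_eq_abs] using
      MeasureTheory.norm_integral_le_integral_norm (μ := volume.restrict (Ioc y z)) f) ?_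
    exact setIntegral_mono_set hfO.abs (Eventually.of_forall fun s => abs_nonneg _)
      (HasSubset.Subset.eventuallyLE (Ioc_subset_Ioc_right hz.2))
  have hQb : ∀ z ∈ Ioc y x, |Q z| ≤ ∫ s in Ioc y x, |g s| := by
    intro z hz
    refine le_trans (by simpa [Real.norm_eq_abs] using
      MeasureTheory.norm_integral_le_integral_norm (μ := volume.restrict (Ioc y z)) g) ?_
    exact setIntegral_mono_set hgO.abs (Eventually.of_forall fun s => abs_nonneg _)
      (HasSubset.Subset.eventuallyLE (Ioc_subset_Ioc_right hz.2))
  have hPQ : ∀ z ∈ Ioc y x, F z = F y + P z ∧ G z = G y + Q z := by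
    intro z hz
    constructor
    · have := hF z y hy hz.1.le
      rw [intervalIntegral.integral_of_le hz.1.le] at this
      linarith [this]
    · have := hG z y hy hz.1.le
      rw [intervalIntegral.integral_of_le hz.1.le] at this
      linarith [this]
  -- integrability of the pieces
  have hQg : IntegrableOn (fun z => Q z * g z) (Ioc y x) := bdd_mul_int hgO hQm hQb
  have hPg : IntegrableOn (fun z => P z * g z) (Ioc y x) := bdd_mul_int hgO hPm hPb
  have hQf : IntegrableOn (fun z => Q z * f z) (Ioc y x) := bdd_mul_int hfO hQm hQb
  have hPf : IntegrableOn (fun z => P z * f z) (Ioc y x) := bdd_mul_int hfO hPm hPb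
  -- the key Fubini identity
  have hPs : ∀ s ∈ Ioc y x, ∫ t in Icc s x, f t = P x - P s := by
    intro s hs
    rw [integral_Icc_eq_integral_Ioc]
    have hsplit : Ioc y s ∪ Ioc s x = Ioc y x := Ioc_union_Ioc_eq_Ioc hs.1.le hs.2
    have hdisj : Disjoint (Ioc y s) (Ioc s x) := Ioc_disjoint_Ioc_of_le le_rfl
    have := setIntegral_union hdisj measurableSet_Ioc
      (hfO.mono_set (hsplit ▸ subset_union_left)) (hfO.mono_set (hsplit ▸ subset_union_right))
    rw [hsplit] at this
    simp only [hPdef]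
    linarith [this]
  have key : (∫ z in Ioc y x, f z * Q z) + ∫ z in Ioc y x, P z * g z = P x * Q x := by
    have hsw := triangle_swap hfO hgO
    have e1 : ∫ t in Ioc y x, f t * ∫ s in Ioc y t, g s = ∫ t in Ioc y x, f t * Q t := rfl
    have e2 : ∫ s in Ioc y x, g s * ∫ t in Icc s x, f t
        = ∫ s in Ioc y x, (g s * P x - g s * P s) := by
      refine setIntegral_congr_fun measurableSet_Ioc fun s hs => ?_
      rw [hPs s hs]; ring
    rw [e1, e2] at hsw
    have e3 : ∫ s in Ioc y x, (g s * P x - g s * P s)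
        = (∫ s in Ioc y x, g s) * P x - ∫ s in Ioc y x, P s * g s := by
      rw [integral_sub (hgO.mul_const _) (hPg.congr_fun (fun z _ => mul_comm _ _) measurableSet_Ioc)]
      rw [integral_mul_const]
      congr 1
      exact setIntegral_congr_fun measurableSet_Ioc fun s _ => mul_comm _ _
    rw [e3] at hsw
    rw [hsw]
    have : (∫ s in Ioc y x, g s) = Q x := rfl
    rw [this]; ring
  -- assemble
  rw [intervalIntegral.integral_of_le hyx]
  have congr1 : ∫ z in Ioc y x, (f z * G z + F z * g z)
      = ∫ z in Ioc y x, ((f z * G y + f z * Q z) + (F y * g z + P z * g z)) := by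
    refine setIntegral_congr_fun measurableSet_Ioc fun z hz => ?_
    obtain ⟨hFz, hGz⟩ := hPQ z hz
    rw [hFz, hGz]; ring
  rw [congr1]
  have i1 : IntegrableOn (fun z => f z * G y) (Ioc y x) := hfO.mul_const _
  have i2 : IntegrableOn (fun z => f z * Q z) (Ioc y x) := by simpa [mul_comm] using hQf
  have i3 : IntegrableOn (fun z => F y * g z) (Ioc y x) := hgO.const_mul _
  have i12 : IntegrableOn (fun z => f z * G y + f z * Q z) (Ioc y x) := i1.add i2
  have i34 : IntegrableOn (fun z => F y * g z + P z * g z) (Ioc y x) := i3.add hPg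
  rw [integral_add i12 i34, integral_add i1 i2, integral_add i3 hPg]
  have e4 : ∫ z in Ioc y x, f z * G y = P x * G y := by rw [integral_mul_const]
  have e5 : ∫ z in Ioc y x, F y * g z = F y * Q x := by rw [MeasureTheory.integral_const_mul]
  have e6 : ∫ z in Ioc y x, f z * Q z = ∫ z in Ioc y x, Q z * f z :=
    setIntegral_congr_fun measurableSet_Ioc fun z _ => mul_comm _ _
  have e7 : ∫ z in Ioc y x, Q z * f z = ∫ z in Ioc y x, f z * Q z :=
    setIntegral_congr_fun measurableSet_Ioc fun z _ => mul_comm _ _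
  have hPx : P x = F x - F y := by
    have := hF x y hy hyx
    rw [intervalIntegral.integral_of_le hyx] at this
    linarith [this]
  have hQx : Q x = G x - G y := by
    have := hG x y hy hyx
    rw [intervalIntegral.integral_of_le hyx] at this
    linarith [this]
  rw [e4, e5, e6, e7]
  have := key
  rw [hPx, hQx] at this ⊢
  linarith [this]

/-- Continuity from the FTC representation. -/
lemma cont_of_ftc {F f : ℝ → ℝ} (hf : LocallyIntegrableOn f (Ici 0))
    (hF : ∀ x y : ℝ, 0 ≤ y → y ≤ x → F x - F y = ∫ z in y..x, f z) :
    ContinuousOn F (Ici 0) := by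
  intro x hx
  simp only [mem_Ici] at hx
  have hsub : Icc (0:ℝ) (x+1) ⊆ Ici 0 := fun z hz => hz.1
  have hint : IntegrableOn f (Icc 0 (x+1)) := hf.integrableOn_compact_subset hsub isCompact_Icc
  have hcont : ContinuousOn (fun z => ∫ t in Ioc 0 z, f t) (Icc 0 (x+1)) :=
    intervalIntegral.continuousOn_primitive hint
  have heq : EqOn F (fun z => F 0 + ∫ t in Ioc 0 z, f t) (Icc 0 (x+1)) := by
    intro z hz
    have := hF z 0 le_rfl hz.1
    rw [intervalIntegral.integral_of_le hz.1] at this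
    simp only
    linarith [this]
  have hFcont : ContinuousOn F (Icc 0 (x+1)) := (continuousOn_const.add hcont).congr heq
  have hmem : Icc (0:ℝ) (x+1) ∈ 𝓝[Ici 0] x := by
    rw [← Ici_inter_Iic]
    exact inter_mem_nhdsWithin _ (Iic_mem_nhds (lt_add_one x))
  exact (hFcont x ⟨hx, by linarith⟩).mono_of_mem_nhdsWithin hmem

/-- Weighted tail bound on the `L¹` norm. -/
lemma tail_bound {h w : ℝ → ℝ} {x : ℝ} (hx : 0 ≤ x)
    (hw1 : ∀ z ∈ Ici (0:ℝ), 1 ≤ w z) (hwmono : MonotoneOn w (Ici 0))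
    (hw13 : IntegrableOn (fun z => (w z) ^ (-(1/3 : ℝ))) (Ici 0))
    (hm : AEStronglyMeasurable h (volume.restrict (Ici 0)))
    (hint : IntegrableOn (fun z => h z ^ 2 * w z) (Ici 0)) :
    IntegrableOn (fun z => |h z|) (Ici x) ∧
      ∫ z in Ici x, |h z| ≤ (w x) ^ (-(1/3 : ℝ)) *
        Real.sqrt ((∫ z in Ici (0:ℝ), (w z) ^ (-(1/3 : ℝ))) * ∫ z in Ici (0:ℝ), h z ^ 2 * w z) := by
  set A := ∫ z in Ici (0:ℝ), (w z) ^ (-(1/3 : ℝ)) with hA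
  set M := ∫ z in Ici (0:ℝ), h z ^ 2 * w z with hM
  set a := (w x) ^ (-(1/3 : ℝ)) with ha
  have hIx : Ici x ⊆ Ici (0:ℝ) := Ici_subset_Ici.mpr hx
  have hwx1 : 1 ≤ w x := hw1 x hx
  have ha0 : 0 < a := Real.rpow_pos_of_pos (by linarith) _
  have hM0 : 0 ≤ M := by
    refine setIntegral_nonneg measurableSet_Ici fun z hz => ?_
    have := hw1 z hz
    positivity
  have hA0 : 0 ≤ A := by
    refine setIntegral_nonneg measurableSet_Ici fun z hz => ?_
    have h1 := hw1 z hz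
    positivity
  -- pointwise domination on `Ici x`
  have hptw : ∀ t : ℝ, 0 < t → ∀ z ∈ Ici x,
      |h z| ≤ (t * (h z ^ 2 * w z) + (a ^ 2 * (w z) ^ (-(1/3 : ℝ))) / t) / 2 := by
    intro t ht z hz
    have hz0 : (0:ℝ) ≤ z := le_trans hx hz
    have hwz1 : 1 ≤ w z := hw1 z hz0
    have hwz0 : 0 < w z := by linarith
    have hmono : w x ≤ w z := hwmono hx hz0 hz
    have hb : (w z) ^ (-(1/3 : ℝ)) ≤ a :=
      Real.rpow_le_rpow_of_nonpos (by linarith) hmono (by norm_num)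
    have hb0 : 0 < (w z) ^ (-(1/3 : ℝ)) := Real.rpow_pos_of_pos hwz0 _
    have hcube : ((w z) ^ (-(1/3 : ℝ))) ^ 3 * w z = 1 := by
      rw [← Real.rpow_natCast ((w z) ^ (-(1/3:ℝ))) 3, ← Real.rpow_mul hwz0.le]
      norm_num
      rw [Real.rpow_neg_one]
      field_simp
    have hinv : 1 / w z ≤ a ^ 2 * (w z) ^ (-(1/3 : ℝ)) := by
      rw [div_le_iff₀ hwz0]
      have hfact : 0 ≤ ((a - (w z) ^ (-(1/3 : ℝ))) * (a + (w z) ^ (-(1/3 : ℝ)))) *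
          ((w z) ^ (-(1/3 : ℝ)) * w z) := by
        have h1 : 0 ≤ a - (w z) ^ (-(1/3 : ℝ)) := by linarith
        have h2 : 0 ≤ a + (w z) ^ (-(1/3 : ℝ)) := by linarith
        positivity
      nlinarith [hcube, hfact]
    have hc : (0:ℝ) < t * w z := by positivity
    have hcc : (t * w z) * (1 / (t * w z)) = 1 := mul_one_div_cancel hc.ne'
    have h2u : 2 * |h z| ≤ (t * w z) * |h z| ^ 2 + 1 / (t * w z) := by
      nlinarith [sq_nonneg ((t * w z) * |h z| - 1), hc, hcc]
    have e5 : (t * w z) * |h z| ^ 2 = t * (h z ^ 2 * w z) := by rw [sq_abs]; ring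
    have e6 : 1 / (t * w z) = (1 / w z) / t := by
      rw [div_div, mul_comm]
    have e7 : (1 / w z) / t ≤ (a ^ 2 * (w z) ^ (-(1/3 : ℝ))) / t := by gcongr
    linarith [h2u, e5.le, e5.ge, e6.le, e6.ge, e7]
  -- integrability of the dominating function and of |h|
  have hdomint : IntegrableOn
      (fun z => (1 * (h z ^ 2 * w z) + (a ^ 2 * (w z) ^ (-(1/3 : ℝ))) / 1) / 2) (Ici x) := by
    refine Integrable.div_const (Integrable.add ?_ ?_) 2
    · exact (hint.mono_set hIx).const_mul 1
    · exact (((hw13.mono_set hIx)).const_mul (a ^ 2)).div_const 1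
  have hhm : AEStronglyMeasurable (fun z => |h z|) (volume.restrict (Ici x)) := by
    have := (hm.mono_measure (Measure.restrict_mono hIx le_rfl)).norm
    simpa [Real.norm_eq_abs] using this
  have habs_int : IntegrableOn (fun z => |h z|) (Ici x) := by
    refine Integrable.mono' hdomint hhm ?_
    filter_upwards [ae_restrict_mem measurableSet_Ici] with z hz
    rw [Real.norm_eq_abs, abs_abs]
    exact hptw 1 one_pos z hz
  refine ⟨habs_int, ?_⟩
  -- the integral bound for each t
  have hXle : ∀ t : ℝ, 0 < t →
      (∫ z in Ici x, |h z|) ≤ (t * M + (a ^ 2 * A) / t) / 2 := by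
    intro t ht
    have hdomt : IntegrableOn
        (fun z => (t * (h z ^ 2 * w z) + (a ^ 2 * (w z) ^ (-(1/3 : ℝ))) / t) / 2) (Ici x) := by
      refine Integrable.div_const (Integrable.add ?_ ?_) 2
      · exact (hint.mono_set hIx).const_mul t
      · exact (((hw13.mono_set hIx)).const_mul (a ^ 2)).div_const t
    have step1 : (∫ z in Ici x, |h z|) ≤
        ∫ z in Ici x, (t * (h z ^ 2 * w z) + (a ^ 2 * (w z) ^ (-(1/3 : ℝ))) / t) / 2 := by
      refine integral_mono_ae habs_int hdomt ?_
      filter_upwards [ae_restrict_mem measurableSet_Ici] with z hz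
      exact hptw t ht z hz
    have step2 : ∫ z in Ici x, (t * (h z ^ 2 * w z) + (a ^ 2 * (w z) ^ (-(1/3 : ℝ))) / t) / 2
        = (t * (∫ z in Ici x, h z ^ 2 * w z) +
            (a ^ 2 * ∫ z in Ici x, (w z) ^ (-(1/3 : ℝ))) / t) / 2 := by
      rw [integral_div, integral_add ((hint.mono_set hIx).const_mul t)
        ((((hw13.mono_set hIx)).const_mul (a ^ 2)).div_const t),
        MeasureTheory.integral_const_mul, integral_div, MeasureTheory.integral_const_mul]
    have hMx : (∫ z in Ici x, h z ^ 2 * w z) ≤ M := by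
      refine setIntegral_mono_set hint ?_ (HasSubset.Subset.eventuallyLE hIx)
      filter_upwards [ae_restrict_mem measurableSet_Ici] with z hz
      have := hw1 z hz
      positivity
    have hAx : (∫ z in Ici x, (w z) ^ (-(1/3 : ℝ))) ≤ A := by
      refine setIntegral_mono_set hw13 ?_ (HasSubset.Subset.eventuallyLE hIx)
      filter_upwards [ae_restrict_mem measurableSet_Ici] with z hz
      have h1 := hw1 z hz
      positivity
    calc (∫ z in Ici x, |h z|) ≤ _ := step1
      _ = _ := step2
      _ ≤ (t * M + (a ^ 2 * A) / t) / 2 := by gcongr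
  have := amgm_opt (by positivity : (0:ℝ) ≤ a ^ 2 * A) hM0 hXle
  calc (∫ z in Ici x, |h z|) ≤ Real.sqrt (a ^ 2 * A * M) := this
    _ = a * Real.sqrt (A * M) := by
        rw [mul_assoc, Real.sqrt_mul (sq_nonneg a), Real.sqrt_sq ha0.le]

set_option maxHeartbeats 2000000 in
/-- the quadratic HJM drift building block
`Sφ(x) = φ(x)∫₀ˣ φ(y) dy` maps `U ∩ {φ(∞) = 0}` into `U` with
`‖Sφ‖_U ≤ C‖φ‖_U²`. -/
theorem stmt_10
    (w : ℝ → ℝ)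
    (hw1 : ∀ x ∈ Set.Ici (0:ℝ), 1 ≤ w x)
    (hwmono : MonotoneOn w (Set.Ici 0))
    (hwC1 : ContDiffOn ℝ 1 w (Set.Ici 0))
    (hw13 : IntegrableOn (fun x => (w x) ^ (-(1/3 : ℝ))) (Set.Ici 0)) :
    ∃ C > 0, ∀ φ d1 d2 : ℝ → ℝ, MemU w φ d1 d2 →
      Tendsto φ atTop (𝓝 0) →
      MemU w (fun x => φ x * ∫ y in (0:ℝ)..x, φ y)
        (fun x => d1 x * (∫ y in (0:ℝ)..x, φ y) + (φ x) ^ 2)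
        (fun x => d2 x * (∫ y in (0:ℝ)..x, φ y) + 3 * φ x * d1 x) ∧
      UNorm w (fun x => φ x * ∫ y in (0:ℝ)..x, φ y)
          (fun x => d1 x * (∫ y in (0:ℝ)..x, φ y) + (φ x) ^ 2)
          (fun x => d2 x * (∫ y in (0:ℝ)..x, φ y) + 3 * φ x * d1 x) ≤
        C * (UNorm w φ d1 d2) ^ 2 := by
  set A := ∫ z in Ici (0:ℝ), (w z) ^ (-(1/3 : ℝ)) with hA
  have hA0 : 0 ≤ A := setIntegral_nonneg measurableSet_Ici fun z hz => by
    have := hw1 z hz; positivity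
  set C := Real.sqrt (1 + 4 * A ^ 3 + 18 * A) with hC
  have hC2 : C ^ 2 = 1 + 4 * A ^ 3 + 18 * A := Real.sq_sqrt (by nlinarith [hA0, pow_nonneg hA0 3])
  have hC0 : 0 < C := Real.sqrt_pos.mpr (by nlinarith [hA0, pow_nonneg hA0 3])
  refine ⟨C, hC0, ?_⟩
  intro φ d1 d2 hmem hφtop
  obtain ⟨⟨hd1loc, hφftc⟩, ⟨hd2loc, hd1ftc⟩, hWint⟩ := hmem
  -- basic continuity and measurability facts
  have hwcont : ContinuousOn w (Ici 0) := hwC1.continuousOn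
  have hφcont : ContinuousOn φ (Ici 0) := cont_of_ftc hd1loc hφftc
  have hd1cont : ContinuousOn d1 (Ici 0) := cont_of_ftc hd2loc hd1ftc
  have hφloc : LocallyIntegrableOn φ (Ici 0) :=
    hφcont.locallyIntegrableOn measurableSet_Ici
  have hφm : AEStronglyMeasurable φ (volume.restrict (Ici 0)) :=
    hφcont.aestronglyMeasurable measurableSet_Ici
  have hd1m : AEStronglyMeasurable d1 (volume.restrict (Ici 0)) :=
    hd1cont.aestronglyMeasurable measurableSet_Ici
  have hd2m : AEStronglyMeasurable d2 (volume.restrict (Ici 0)) :=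
    hd2loc.aestronglyMeasurable
  have hwm : AEStronglyMeasurable w (volume.restrict (Ici 0)) :=
    hwcont.aestronglyMeasurable measurableSet_Ici
  -- interval integrability of φ on [0,y]..[y,x]
  have hφii : ∀ a b : ℝ, 0 ≤ a → a ≤ b → IntervalIntegrable φ volume a b := by
    intro a b ha hab
    rw [intervalIntegrable_iff_integrableOn_Ioc_of_le hab]
    exact (hφloc.integrableOn_compact_subset
      (fun z hz => le_trans ha hz.1 : Icc a b ⊆ Ici 0) isCompact_Icc).mono_set
      Ioc_subset_Icc_self
  set I : ℝ → ℝ := fun x => ∫ y in (0:ℝ)..x, φ y with hIdef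
  have hIftc : ∀ x y : ℝ, 0 ≤ y → y ≤ x → I x - I y = ∫ z in y..x, φ z := by
    intro x y hy hyx
    have := intervalIntegral.integral_add_adjacent_intervals
      (hφii 0 y le_rfl hy) (hφii y x hy hyx)
    simp only [hIdef]
    linarith [this]
  have hIcont : ContinuousOn I (Ici 0) := cont_of_ftc hφloc hIftc
  have hIm : AEStronglyMeasurable I (volume.restrict (Ici 0)) :=
    hIcont.aestronglyMeasurable measurableSet_Ici
  -- abbreviations
  set M := ∫ z in Ici (0:ℝ), ((d1 z) ^ 2 + (d2 z) ^ 2) * w z with hM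
  have hM0 : 0 ≤ M := setIntegral_nonneg measurableSet_Ici fun z hz => by
    have := hw1 z hz; positivity
  set P := Real.sqrt (A * M) with hP
  have hP0 : 0 ≤ P := Real.sqrt_nonneg _
  have hP2 : P ^ 2 = A * M := Real.sq_sqrt (mul_nonneg hA0 hM0)
  -- integrability of d1² w and d2² w, with integral ≤ M
  have hsq : ∀ (h : ℝ → ℝ), AEStronglyMeasurable h (volume.restrict (Ici 0)) →
      (∀ᵐ z ∂(volume.restrict (Ici 0)), h z ^ 2 ≤ (d1 z) ^ 2 + (d2 z) ^ 2) →
      IntegrableOn (fun z => h z ^ 2 * w z) (Ici 0) ∧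
        (∫ z in Ici (0:ℝ), h z ^ 2 * w z) ≤ M := by
    intro h hm hb
    have hint : IntegrableOn (fun z => h z ^ 2 * w z) (Ici 0) := by
      refine Integrable.mono' hWint ?_ ?_
      · have := ((hm.mul hm).mul hwm)
        exact this.congr (Eventually.of_forall fun z => by simp [pow_two])
      · filter_upwards [ae_restrict_mem measurableSet_Ici, hb] with z hz hbz
        have hwz := hw1 z hz
        rw [Real.norm_eq_abs, abs_mul, abs_of_nonneg (sq_nonneg (h z)),
          abs_of_nonneg (by linarith : (0:ℝ) ≤ w z)]
        nlinarith [sq_nonneg (h z)]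
    refine ⟨hint, ?_⟩
    refine integral_mono_ae hint hWint ?_
    filter_upwards [ae_restrict_mem measurableSet_Ici, hb] with z hz hbz
    have hwz := hw1 z hz
    nlinarith [sq_nonneg (h z)]
  have hd1sq := hsq d1 hd1m (Eventually.of_forall fun z => by nlinarith [sq_nonneg (d2 z)])
  have hd2sq := hsq d2 hd2m (Eventually.of_forall fun z => by nlinarith [sq_nonneg (d1 z)])
  -- tail bounds for d1 and d2
  have htail : ∀ (h : ℝ → ℝ), AEStronglyMeasurable h (volume.restrict (Ici 0)) →
      IntegrableOn (fun z => h z ^ 2 * w z) (Ici 0) →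
      ((∫ z in Ici (0:ℝ), h z ^ 2 * w z) ≤ M) →
      ∀ x : ℝ, 0 ≤ x → IntegrableOn (fun z => |h z|) (Ici x) ∧
        ∫ z in Ici x, |h z| ≤ (w x) ^ (-(1/3 : ℝ)) * P := by
    intro h hm hint hle x hx
    obtain ⟨hi, hb⟩ := tail_bound hx hw1 hwmono hw13 hm hint
    refine ⟨hi, hb.trans ?_⟩
    have h1 : Real.sqrt (A * ∫ z in Ici (0:ℝ), h z ^ 2 * w z) ≤ P :=
      Real.sqrt_le_sqrt (mul_le_mul_of_nonneg_left hle hA0)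
    have h2 : (0:ℝ) ≤ (w x) ^ (-(1/3 : ℝ)) := Real.rpow_nonneg (by linarith [hw1 x hx]) _
    exact mul_le_mul_of_nonneg_left h1 h2
  have hd1tail := htail d1 hd1m hd1sq.1 hd1sq.2
  have hd2tail := htail d2 hd2m hd2sq.1 hd2sq.2
  -- pointwise bound for φ
  have hφbd : ∀ x : ℝ, 0 ≤ x → |φ x| ≤ (w x) ^ (-(1/3 : ℝ)) * P := by
    intro x hx
    obtain ⟨hi, hb⟩ := hd1tail x hx
    have htend : Tendsto (fun T => |φ T - φ x|) atTop (𝓝 |(0:ℝ) - φ x|) :=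
      (hφtop.sub_const (φ x)).abs
    have hfin : |(0:ℝ) - φ x| = |φ x| := by rw [zero_sub, abs_neg]
    rw [← hfin]
    refine le_of_tendsto htend ?_
    filter_upwards [eventually_ge_atTop x] with T hT
    rw [hφftc T x hx hT, intervalIntegral.integral_of_le hT]
    calc |∫ z in Ioc x T, d1 z| ≤ ∫ z in Ioc x T, |d1 z| := by
          simpa [Real.norm_eq_abs] using
            norm_integral_le_integral_norm (μ := volume.restrict (Ioc x T)) d1
      _ ≤ ∫ z in Ici x, |d1 z| := setIntegral_mono_set hi
          (Eventually.of_forall fun z => abs_nonneg _)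
          (HasSubset.Subset.eventuallyLE (fun z hz => le_of_lt hz.1))
      _ ≤ _ := hb
  have hφsup : ∀ x : ℝ, 0 ≤ x → |φ x| ≤ P := by
    intro x hx
    refine (hφbd x hx).trans ?_
    have h1 : (w x) ^ (-(1/3 : ℝ)) ≤ 1 :=
      Real.rpow_le_one_of_one_le_of_nonpos (hw1 x hx) (by norm_num)
    nlinarith [hP0]
  -- φ ∈ L¹ with ∫|φ| ≤ A * P, hence |I| ≤ A * P
  have hφabs_int : IntegrableOn (fun z => |φ z|) (Ici 0) := by
    refine Integrable.mono' (hw13.mul_const P) (by simpa [Real.norm_eq_abs] using hφm.norm) ?_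
    filter_upwards [ae_restrict_mem measurableSet_Ici] with z hz
    rw [Real.norm_eq_abs, abs_abs]
    exact hφbd z hz
  have hφL1 : ∫ z in Ici (0:ℝ), |φ z| ≤ A * P := by
    calc ∫ z in Ici (0:ℝ), |φ z| ≤ ∫ z in Ici (0:ℝ), (w z) ^ (-(1/3 : ℝ)) * P := by
          refine integral_mono_ae hφabs_int (hw13.mul_const P) ?_
          filter_upwards [ae_restrict_mem measurableSet_Ici] with z hz
          exact hφbd z hz
      _ = A * P := by rw [integral_mul_const]
  have hIbd : ∀ x : ℝ, 0 ≤ x → |I x| ≤ A * P := by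
    intro x hx
    have h1 : |I x| ≤ ∫ z in Ioc 0 x, |φ z| := by
      simp only [hIdef]
      rw [intervalIntegral.integral_of_le hx]
      simpa [Real.norm_eq_abs] using
        norm_integral_le_integral_norm (μ := volume.restrict (Ioc 0 x)) φ
    refine h1.trans ((setIntegral_mono_set hφabs_int
      (Eventually.of_forall fun z => abs_nonneg _)
      (HasSubset.Subset.eventuallyLE (fun z hz => hz.1.le))).trans hφL1)
  -- the new triple
  have hD1cont : ContinuousOn (fun x => d1 x * I x + φ x ^ 2) (Ici 0) :=
    (hd1cont.mul hIcont).add (hφcont.pow 2)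
  have hD1loc : LocallyIntegrableOn (fun x => d1 x * I x + φ x ^ 2) (Ici 0) :=
    hD1cont.locallyIntegrableOn measurableSet_Ici
  have hSftc : ∀ x y : ℝ, 0 ≤ y → y ≤ x →
      φ x * I x - φ y * I y = ∫ z in y..x, (d1 z * I z + φ z ^ 2) := by
    intro x y hy hyx
    rw [ftc_mul hd1loc hφloc hφftc hIftc hy hyx]
    exact intervalIntegral.integral_congr fun z _ => by ring
  have hD2loc : LocallyIntegrableOn (fun x => d2 x * I x + 3 * φ x * d1 x) (Ici 0) := by
    rw [locallyIntegrableOn_iff isClosed_Ici.isLocallyClosed]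
    intro k hk hkc
    have hd2k : IntegrableOn d2 k := hd2loc.integrableOn_compact_subset hk hkc
    have hd1k : IntegrableOn d1 k := hd1loc.integrableOn_compact_subset hk hkc
    refine Integrable.mono' ((hd2k.abs.const_mul (A * P)).add (hd1k.abs.const_mul (3 * P))) ?_ ?_
    · refine AEStronglyMeasurable.add ?_ ?_
      · exact (hd2m.mono_measure (Measure.restrict_mono hk le_rfl)).mul
          ((hIcont.mono hk).aestronglyMeasurable hkc.measurableSet)
      · exact ((continuousOn_const.mul (hφcont.mono hk)).mul
          (hd1cont.mono hk)).aestronglyMeasurable hkc.measurableSet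
    · filter_upwards [ae_restrict_mem hkc.measurableSet] with z hz
      have hz0 : (0:ℝ) ≤ z := hk hz
      have e1 := abs_add_le (d2 z * I z) (3 * φ z * d1 z)
      have e2 : |d2 z * I z| ≤ A * P * |d2 z| := by
        rw [abs_mul, mul_comm]
        exact mul_le_mul_of_nonneg_right (hIbd z hz0) (abs_nonneg _)
      have e3 : |3 * φ z * d1 z| ≤ 3 * P * |d1 z| := by
        rw [abs_mul, abs_mul]
        have h3 : |(3:ℝ)| = 3 := by norm_num
        rw [h3]
        have := hφsup z hz0
        nlinarith [abs_nonneg (d1 z), abs_nonneg (φ z)]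
      rw [Real.norm_eq_abs]
      calc |d2 z * I z + 3 * φ z * d1 z| ≤ |d2 z * I z| + |3 * φ z * d1 z| := e1
        _ ≤ A * P * |d2 z| + 3 * P * |d1 z| := add_le_add e2 e3
  have hD1ftc : ∀ x y : ℝ, 0 ≤ y → y ≤ x →
      (d1 x * I x + φ x ^ 2) - (d1 y * I y + φ y ^ 2)
        = ∫ z in y..x, (d2 z * I z + 3 * φ z * d1 z) := by
    intro x y hy hyx
    have h1 := ftc_mul hd2loc hφloc hd1ftc hIftc hy hyx
    have h2 := ftc_mul hd1loc hd1loc hφftc hφftc hy hyx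
    have hsub : Icc y x ⊆ Ici (0:ℝ) := fun z hz => le_trans hy hz.1
    have hd1O : IntegrableOn d1 (Ioc y x) :=
      (hd1loc.integrableOn_compact_subset hsub isCompact_Icc).mono_set Ioc_subset_Icc_self
    have hd2O : IntegrableOn d2 (Ioc y x) :=
      (hd2loc.integrableOn_compact_subset hsub isCompact_Icc).mono_set Ioc_subset_Icc_self
    have hIocsub : Ioc y x ⊆ Ici (0:ℝ) := fun z hz => le_trans hy hz.1.le
    have hIm' : AEStronglyMeasurable I (volume.restrict (Ioc y x)) :=
      hIm.mono_measure (Measure.restrict_mono hIocsub le_rfl)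
    have hφm' : AEStronglyMeasurable φ (volume.restrict (Ioc y x)) :=
      hφm.mono_measure (Measure.restrict_mono hIocsub le_rfl)
    have j1 : IntegrableOn (fun z => I z * d2 z) (Ioc y x) :=
      bdd_mul_int hd2O hIm' fun z hz => hIbd z (hIocsub hz)
    have j2 : IntegrableOn (fun z => φ z * d1 z) (Ioc y x) :=
      bdd_mul_int hd1O hφm' fun z hz => hφsup z (hIocsub hz)
    have ii1 : IntervalIntegrable (fun z => d2 z * I z + d1 z * φ z) volume y x := by
      rw [intervalIntegrable_iff_integrableOn_Ioc_of_le hyx]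
      refine (j1.add j2).congr ?_
      exact Eventually.of_forall fun z => by simp only [Pi.add_apply]; ring
    have ii2 : IntervalIntegrable (fun z => d1 z * φ z + φ z * d1 z) volume y x := by
      rw [intervalIntegrable_iff_integrableOn_Ioc_of_le hyx]
      refine (j2.add j2).congr ?_
      exact Eventually.of_forall fun z => by simp only [Pi.add_apply]; ring
    calc (d1 x * I x + φ x ^ 2) - (d1 y * I y + φ y ^ 2)
        = (d1 x * I x - d1 y * I y) + (φ x * φ x - φ y * φ y) := by ring
      _ = (∫ z in y..x, (d2 z * I z + d1 z * φ z))
          + ∫ z in y..x, (d1 z * φ z + φ z * d1 z) := by rw [h1, h2]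
      _ = ∫ z in y..x, ((d2 z * I z + d1 z * φ z) + (d1 z * φ z + φ z * d1 z)) :=
          (intervalIntegral.integral_add ii1 ii2).symm
      _ = ∫ z in y..x, (d2 z * I z + 3 * φ z * d1 z) :=
          intervalIntegral.integral_congr fun z _ => by ring
  -- integrability of the weighted square sum for the new triple
  set K := 2 * (A * P) ^ 2 + 18 * P ^ 2 with hK
  have hD1m : AEStronglyMeasurable (fun x => d1 x * I x + φ x ^ 2)
      (volume.restrict (Ici 0)) := hD1cont.aestronglyMeasurable measurableSet_Ici
  have hD2m : AEStronglyMeasurable (fun x => d2 x * I x + 3 * φ x * d1 x)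
      (volume.restrict (Ici 0)) := by
    refine (hd2m.mul hIm).add ?_
    exact ((continuousOn_const.mul hφcont).mul hd1cont).aestronglyMeasurable measurableSet_Ici
  have hGm : AEStronglyMeasurable
      (fun z => ((d1 z * I z + φ z ^ 2) ^ 2 + (d2 z * I z + 3 * φ z * d1 z) ^ 2) * w z)
      (volume.restrict (Ici 0)) := by
    have := ((hD1m.mul hD1m).add (hD2m.mul hD2m)).mul hwm
    exact this.congr (Eventually.of_forall fun z => by simp [pow_two])
  have hptw : ∀ z ∈ Ici (0:ℝ),
      ((d1 z * I z + φ z ^ 2) ^ 2 + (d2 z * I z + 3 * φ z * d1 z) ^ 2) * w z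
        ≤ K * (((d1 z) ^ 2 + (d2 z) ^ 2) * w z) + 2 * P ^ 4 * (w z) ^ (-(1/3 : ℝ)) := by
    intro z hz
    have hwz1 : 1 ≤ w z := hw1 z hz
    have hwz0 : (0:ℝ) < w z := by linarith
    set u := (w z) ^ (-(1/3 : ℝ)) with hu
    have hu0 : 0 < u := Real.rpow_pos_of_pos hwz0 _
    have hcube : u ^ 3 * w z = 1 := by
      rw [hu, ← Real.rpow_natCast ((w z) ^ (-(1/3:ℝ))) 3, ← Real.rpow_mul hwz0.le]
      norm_num
      rw [Real.rpow_neg_one]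
      field_simp
    have hIz := abs_le.mp (hIbd z hz)
    have hI2 : (I z) ^ 2 ≤ (A * P) ^ 2 := sq_le_sq' hIz.1 hIz.2
    have hφz := abs_le.mp (hφsup z hz)
    have hφ2 : (φ z) ^ 2 ≤ P ^ 2 := sq_le_sq' hφz.1 hφz.2
    have hφu := hφbd z hz
    have hφ2u : (φ z) ^ 2 ≤ (u * P) ^ 2 := by
      rw [← sq_abs]
      exact pow_le_pow_left₀ (abs_nonneg _) hφu 2
    have e1 : (d1 z) ^ 2 * (I z) ^ 2 ≤ (d1 z) ^ 2 * (A * P) ^ 2 :=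
      mul_le_mul_of_nonneg_left hI2 (sq_nonneg _)
    have e2 : (d2 z) ^ 2 * (I z) ^ 2 ≤ (d2 z) ^ 2 * (A * P) ^ 2 :=
      mul_le_mul_of_nonneg_left hI2 (sq_nonneg _)
    have e3 : (φ z) ^ 2 * (d1 z) ^ 2 ≤ P ^ 2 * (d1 z) ^ 2 :=
      mul_le_mul_of_nonneg_right hφ2 (sq_nonneg _)
    have h1 : (d1 z * I z + φ z ^ 2) ^ 2 ≤
        2 * (A * P) ^ 2 * (d1 z) ^ 2 + 2 * ((φ z) ^ 2) ^ 2 := by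
      have q1 : (d1 z * I z + φ z ^ 2) ^ 2 + (d1 z * I z - φ z ^ 2) ^ 2
          = 2 * ((d1 z) ^ 2 * (I z) ^ 2) + 2 * ((φ z) ^ 2) ^ 2 := by ring
      linarith only [q1, sq_nonneg (d1 z * I z - φ z ^ 2), e1]
    have h2 : (d2 z * I z + 3 * φ z * d1 z) ^ 2 ≤
        2 * (A * P) ^ 2 * (d2 z) ^ 2 + 18 * P ^ 2 * (d1 z) ^ 2 := by
      have q2 : (d2 z * I z + 3 * φ z * d1 z) ^ 2 + (d2 z * I z - 3 * φ z * d1 z) ^ 2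
          = 2 * ((d2 z) ^ 2 * (I z) ^ 2) + 18 * ((φ z) ^ 2 * (d1 z) ^ 2) := by ring
      linarith only [q2, sq_nonneg (d2 z * I z - 3 * φ z * d1 z), e2, e3]
    have h4 : ((φ z) ^ 2) ^ 2 ≤ u ^ 4 * P ^ 4 := by
      have := pow_le_pow_left₀ (sq_nonneg (φ z)) hφ2u 2
      calc ((φ z) ^ 2) ^ 2 ≤ ((u * P) ^ 2) ^ 2 := this
        _ = u ^ 4 * P ^ 4 := by ring
    have h3 : ((φ z) ^ 2) ^ 2 * w z ≤ P ^ 4 * u := by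
      calc ((φ z) ^ 2) ^ 2 * w z ≤ (u ^ 4 * P ^ 4) * w z :=
            mul_le_mul_of_nonneg_right h4 hwz0.le
        _ = P ^ 4 * u := by linear_combination (P ^ 4 * u) * hcube
    have m1 := mul_le_mul_of_nonneg_right h1 hwz0.le
    have m2 := mul_le_mul_of_nonneg_right h2 hwz0.le
    have hnn : (0:ℝ) ≤ 18 * P ^ 2 * ((d2 z) ^ 2 * w z) := by positivity
    have expand : K * (((d1 z) ^ 2 + (d2 z) ^ 2) * w z)
        = (2 * (A * P) ^ 2 + 18 * P ^ 2) * ((d1 z) ^ 2 * w z)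
          + (2 * (A * P) ^ 2 + 18 * P ^ 2) * ((d2 z) ^ 2 * w z) := by
      rw [hK]; ring
    calc ((d1 z * I z + φ z ^ 2) ^ 2 + (d2 z * I z + 3 * φ z * d1 z) ^ 2) * w z
        = (d1 z * I z + φ z ^ 2) ^ 2 * w z
          + (d2 z * I z + 3 * φ z * d1 z) ^ 2 * w z := by ring
      _ ≤ (2 * (A * P) ^ 2 * (d1 z) ^ 2 + 2 * ((φ z) ^ 2) ^ 2) * w z
          + (2 * (A * P) ^ 2 * (d2 z) ^ 2 + 18 * P ^ 2 * (d1 z) ^ 2) * w z :=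
          add_le_add m1 m2
      _ = (2 * (A * P) ^ 2 + 18 * P ^ 2) * ((d1 z) ^ 2 * w z)
          + 2 * (A * P) ^ 2 * ((d2 z) ^ 2 * w z) + 2 * (((φ z) ^ 2) ^ 2 * w z) := by ring
      _ ≤ K * (((d1 z) ^ 2 + (d2 z) ^ 2) * w z) + 2 * P ^ 4 * (w z) ^ (-(1/3 : ℝ)) := by
          rw [expand]
          have t1 : 2 * (((φ z) ^ 2) ^ 2 * w z) ≤ 2 * (P ^ 4 * u) := by linarith only [h3]
          simp only [← hu]
          linarith only [hnn, t1]
  have hg0int : IntegrableOn (fun z => K * (((d1 z) ^ 2 + (d2 z) ^ 2) * w z)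
      + 2 * P ^ 4 * (w z) ^ (-(1/3 : ℝ))) (Ici 0) :=
    (hWint.const_mul K).add (hw13.const_mul (2 * P ^ 4))
  have hDDint : IntegrableOn
      (fun z => ((d1 z * I z + φ z ^ 2) ^ 2 + (d2 z * I z + 3 * φ z * d1 z) ^ 2) * w z)
      (Ici 0) := by
    refine Integrable.mono' hg0int hGm ?_
    filter_upwards [ae_restrict_mem measurableSet_Ici] with z hz
    have hwz1 := hw1 z hz
    rw [Real.norm_eq_abs, abs_of_nonneg (mul_nonneg (by positivity)
      (by linarith : (0:ℝ) ≤ w z))]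
    exact hptw z hz
  have hDDle : (∫ z in Ici (0:ℝ),
      ((d1 z * I z + φ z ^ 2) ^ 2 + (d2 z * I z + 3 * φ z * d1 z) ^ 2) * w z)
      ≤ K * M + 2 * P ^ 4 * A := by
    calc (∫ z in Ici (0:ℝ),
        ((d1 z * I z + φ z ^ 2) ^ 2 + (d2 z * I z + 3 * φ z * d1 z) ^ 2) * w z)
        ≤ ∫ z in Ici (0:ℝ), (K * (((d1 z) ^ 2 + (d2 z) ^ 2) * w z)
            + 2 * P ^ 4 * (w z) ^ (-(1/3 : ℝ))) := by
          refine integral_mono_ae hDDint hg0int ?_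
          filter_upwards [ae_restrict_mem measurableSet_Ici] with z hz
          exact hptw z hz
      _ = K * M + 2 * P ^ 4 * A := by
          rw [integral_add (hWint.const_mul K) (hw13.const_mul (2 * P ^ 4)),
            MeasureTheory.integral_const_mul, MeasureTheory.integral_const_mul]
  -- switch the auxiliary facts to the explicit lambdas
  simp only [hIdef] at hD1loc hSftc hD2loc hD1ftc hDDint hDDle
  constructor
  · exact ⟨⟨hD1loc, hSftc⟩, ⟨hD2loc, hD1ftc⟩, hDDint⟩
  -- the norm bound
  · set T := (φ 0) ^ 2 + (d1 0) ^ 2 + M with hT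
    have hT0 : 0 ≤ T := by
      have := sq_nonneg (φ 0); have := sq_nonneg (d1 0); rw [hT]; linarith [hM0]
    have hMT : M ≤ T := by
      have := sq_nonneg (φ 0); have := sq_nonneg (d1 0); rw [hT]; linarith
    have hφ0T : (φ 0) ^ 2 ≤ T := by
      have := sq_nonneg (d1 0); rw [hT]; linarith [hM0]
    have hI0 : (∫ y in (0:ℝ)..(0:ℝ), φ y) = 0 := intervalIntegral.integral_same
    unfold UNorm
    rw [← hM, show (φ 0) ^ 2 + (d1 0) ^ 2 + M = T from hT.symm, Real.sq_sqrt hT0]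
    have hM2T : M ^ 2 ≤ T ^ 2 := pow_le_pow_left₀ hM0 hMT 2
    have hφ4 : ((φ 0) ^ 2) ^ 2 ≤ T ^ 2 := pow_le_pow_left₀ (sq_nonneg _) hφ0T 2
    have k1 : A ^ 3 * M ^ 2 ≤ A ^ 3 * T ^ 2 :=
      mul_le_mul_of_nonneg_left hM2T (by positivity)
    have k2 : A * M ^ 2 ≤ A * T ^ 2 := mul_le_mul_of_nonneg_left hM2T hA0
    have hsub : K * M + 2 * P ^ 4 * A = 4 * A ^ 3 * M ^ 2 + 18 * A * M ^ 2 := by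
      rw [hK]
      linear_combination (2 * A ^ 2 * M + 18 * M + 2 * A * (P ^ 2 + A * M)) * hP2
    have hXnum : (φ 0 * ∫ y in (0:ℝ)..(0:ℝ), φ y) ^ 2
        + (d1 0 * (∫ y in (0:ℝ)..(0:ℝ), φ y) + (φ 0) ^ 2) ^ 2
        + (∫ z in Ici (0:ℝ), ((d1 z * (∫ y in (0:ℝ)..z, φ y) + φ z ^ 2) ^ 2
            + (d2 z * (∫ y in (0:ℝ)..z, φ y) + 3 * φ z * d1 z) ^ 2) * w z)
        ≤ (C * T) ^ 2 := by
      rw [hI0]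
      have e : (C * T) ^ 2 = C ^ 2 * T ^ 2 := by ring
      rw [e, hC2]
      have hle := hDDle
      rw [hsub] at hle
      simp only [mul_zero, zero_add, zero_pow, ne_eq, OfNat.ofNat_ne_zero,
        not_false_eq_true]
      nlinarith [hφ4, k1, k2, hle]
    calc Real.sqrt _ ≤ Real.sqrt ((C * T) ^ 2) := Real.sqrt_le_sqrt hXnum
      _ = C * T := Real.sqrt_sq (by positivity)
end

section
/- Let U be the weighted Hilbert space as above. There is a constant C such that for all φ, ψ ∈ U with φ(∞) = ψ(∞) = 0, the map Sφ(x) = φ(x) ∫₀ˣ φ(y) dy satisfies the local Lipschitz estimate ‖Sφ − Sψ‖_U² ≤ C (‖φ‖_U² + ‖ψ‖_U²) ‖φ − ψ‖_U². -/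
open MeasureTheory Set Filter Topology

section Stmt11Aux
variable {w θ t1 t2 : ℝ → ℝ}

lemma ae_mem_imp {p : ℝ → Prop} (h : ∀ x ∈ Set.Ici (0:ℝ), p x) :
    ∀ᵐ x ∂(volume.restrict (Set.Ici (0:ℝ))), p x :=
  ae_restrict_of_forall_mem measurableSet_Ici h

lemma ae_mem_imp' {s : Set ℝ} (hs : MeasurableSet s) {p : ℝ → Prop}
    (h : ∀ x ∈ s, p x) : ∀ᵐ x ∂(volume.restrict s), p x :=
  ae_restrict_of_forall_mem hs h

lemma wmeas (hwC1 : ContDiffOn ℝ 1 w (Set.Ici 0)) :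
    AEStronglyMeasurable w (volume.restrict (Set.Ici (0:ℝ))) :=
  hwC1.continuousOn.aestronglyMeasurable measurableSet_Ici

lemma wrpow_meas (hw1 : ∀ x ∈ Set.Ici (0:ℝ), 1 ≤ w x)
    (hwC1 : ContDiffOn ℝ 1 w (Set.Ici 0)) (r : ℝ) :
    AEStronglyMeasurable (fun x => (w x) ^ r) (volume.restrict (Set.Ici (0:ℝ))) := by
  refine (hwC1.continuousOn.rpow_const fun x hx => Or.inl ?_).aestronglyMeasurable
    measurableSet_Ici
  have := hw1 x hx; intro h; rw [h] at this; linarith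

lemma winv_int (hw1 : ∀ x ∈ Set.Ici (0:ℝ), 1 ≤ w x)
    (hwC1 : ContDiffOn ℝ 1 w (Set.Ici 0))
    (hw13 : IntegrableOn (fun x => (w x) ^ (-(1/3 : ℝ))) (Set.Ici 0)) :
    IntegrableOn (fun x => (w x) ^ (-(1:ℝ))) (Set.Ici 0) := by
  refine hw13.mono' (wrpow_meas hw1 hwC1 _) (ae_mem_imp fun x hx => ?_)
  have h1 : (1:ℝ) ≤ w x := hw1 x hx
  rw [Real.norm_of_nonneg (Real.rpow_nonneg (by linarith) _)]
  exact Real.rpow_le_rpow_of_exponent_le h1 (by norm_num)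

lemma tail13_le (hw1 : ∀ x ∈ Set.Ici (0:ℝ), 1 ≤ w x)
    (hw13 : IntegrableOn (fun x => (w x) ^ (-(1/3 : ℝ))) (Set.Ici 0))
    {x : ℝ} (hx : 0 ≤ x) :
    ∫ y in Ioi x, (w y)^(-(1/3):ℝ) ≤ ∫ y in Ici (0:ℝ), (w y)^(-(1/3):ℝ) := by
  refine setIntegral_mono_set hw13
    (ae_mem_imp fun y hy => Real.rpow_nonneg (by linarith [hw1 y hy]) _) ?_
  exact HasSubset.Subset.eventuallyLE (fun y hy => le_trans hx (le_of_lt hy))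

lemma tail1_le (hw1 : ∀ x ∈ Set.Ici (0:ℝ), 1 ≤ w x)
    (hwmono : MonotoneOn w (Set.Ici 0))
    (hwC1 : ContDiffOn ℝ 1 w (Set.Ici 0))
    (hw13 : IntegrableOn (fun x => (w x) ^ (-(1/3 : ℝ))) (Set.Ici 0))
    {x : ℝ} (hx : 0 ≤ x) :
    ∫ y in Ioi x, (w y)^(-(1:ℝ)) ≤
      (∫ y in Ici (0:ℝ), (w y)^(-(1/3):ℝ)) * (w x)^(-(2/3):ℝ) := by
  have hsub : Ioi x ⊆ Ici (0:ℝ) := fun y hy => le_trans hx (le_of_lt hy)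
  have h1 : ∫ y in Ioi x, (w y)^(-(1:ℝ)) ≤
      ∫ y in Ioi x, (w x)^(-(2/3):ℝ) * (w y)^(-(1/3):ℝ) := by
    refine setIntegral_mono_on ((winv_int hw1 hwC1 hw13).mono_set hsub)
      ((hw13.mono_set hsub).const_mul _) measurableSet_Ioi fun y hy => ?_
    have hy0 : y ∈ Set.Ici (0:ℝ) := hsub hy
    have hwy : (0:ℝ) < w y := lt_of_lt_of_le one_pos (hw1 y hy0)
    have hwx : (0:ℝ) < w x := lt_of_lt_of_le one_pos (hw1 x hx)
    have hxy : w x ≤ w y := hwmono hx hy0 (le_of_lt hy)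
    have : (w y)^(-(1:ℝ)) = (w y)^(-(2/3):ℝ) * (w y)^(-(1/3):ℝ) := by
      rw [← Real.rpow_add hwy]; norm_num
    rw [this]
    exact mul_le_mul_of_nonneg_right
      (Real.rpow_le_rpow_of_nonpos hwx hxy (by norm_num))
      (Real.rpow_nonneg (le_of_lt hwy) _)
  rw [integral_const_mul] at h1
  calc ∫ y in Ioi x, (w y)^(-(1:ℝ))
      ≤ (w x)^(-(2/3):ℝ) * ∫ y in Ioi x, (w y)^(-(1/3):ℝ) := h1
    _ ≤ (w x)^(-(2/3):ℝ) * ∫ y in Ici (0:ℝ), (w y)^(-(1/3):ℝ) := by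
        exact mul_le_mul_of_nonneg_left (tail13_le hw1 hw13 hx)
          (Real.rpow_nonneg (le_of_lt (lt_of_lt_of_le one_pos (hw1 x hx))) _)
    _ = _ := mul_comm _ _

lemma sq_int_left (hw1 : ∀ x ∈ Set.Ici (0:ℝ), 1 ≤ w x)
    (hwC1 : ContDiffOn ℝ 1 w (Set.Ici 0))
    (h1 : AEStronglyMeasurable t1 (volume.restrict (Set.Ici (0:ℝ))))
    (hI : IntegrableOn (fun x => ((t1 x)^2 + (t2 x)^2) * w x) (Set.Ici 0)) :
    IntegrableOn (fun x => (t1 x)^2 * w x) (Set.Ici 0) := by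
  refine hI.mono' (((h1.mul h1).mul (wmeas hwC1)).congr
    (Filter.Eventually.of_forall fun x => by simp only [Pi.mul_apply, Pi.pow_apply]; ring)) (ae_mem_imp fun x hx => ?_)
  have hw : (1:ℝ) ≤ w x := hw1 x hx
  rw [Real.norm_of_nonneg (by positivity)]
  nlinarith [sq_nonneg (t2 x)]

lemma deriv_int (hw1 : ∀ x ∈ Set.Ici (0:ℝ), 1 ≤ w x)
    (hwC1 : ContDiffOn ℝ 1 w (Set.Ici 0))
    (hw13 : IntegrableOn (fun x => (w x) ^ (-(1/3 : ℝ))) (Set.Ici 0))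
    (h1 : AEStronglyMeasurable t1 (volume.restrict (Set.Ici (0:ℝ))))
    (hI : IntegrableOn (fun x => ((t1 x)^2 + (t2 x)^2) * w x) (Set.Ici 0)) :
    IntegrableOn t1 (Set.Ici 0) := by
  have hg : IntegrableOn
      (fun x => ((t1 x)^2 * w x + (w x)^(-(1:ℝ)))/2) (Set.Ici 0) :=
    ((sq_int_left hw1 hwC1 h1 hI).add (winv_int hw1 hwC1 hw13)).div_const 2
  refine hg.mono' h1 (ae_mem_imp fun x hx => ?_)
  have hw : (1:ℝ) ≤ w x := hw1 x hx
  have hwpos : (0:ℝ) < w x := by linarith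
  rw [Real.norm_eq_abs, Real.rpow_neg_one]
  have hinv : w x * (w x)⁻¹ = 1 := mul_inv_cancel₀ (ne_of_gt hwpos)
  have hinvpos : (0:ℝ) < (w x)⁻¹ := inv_pos.2 hwpos
  have key : 2 * |t1 x| * w x ≤ (t1 x)^2*(w x)^2 + 1 := by
    nlinarith [sq_nonneg (|t1 x| * w x - 1), sq_abs (t1 x)]
  nlinarith [abs_nonneg (t1 x)]

lemma tail_cs (hw1 : ∀ x ∈ Set.Ici (0:ℝ), 1 ≤ w x)
    (hwC1 : ContDiffOn ℝ 1 w (Set.Ici 0))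
    (hw13 : IntegrableOn (fun x => (w x) ^ (-(1/3 : ℝ))) (Set.Ici 0))
    (h1 : AEStronglyMeasurable t1 (volume.restrict (Set.Ici (0:ℝ))))
    (hsq : IntegrableOn (fun x => (t1 x)^2 * w x) (Set.Ici 0))
    {x : ℝ} (hx : 0 ≤ x) :
    ∫ y in Ioi x, |t1 y| ≤
      Real.sqrt (∫ y in Ioi x, (t1 y)^2 * w y) *
        Real.sqrt (∫ y in Ioi x, (w y)^(-(1:ℝ))) := by
  have hsub : Ioi x ⊆ Ici (0:ℝ) := fun y hy => le_trans hx (le_of_lt hy)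
  have hres : volume.restrict (Ioi x) ≤ volume.restrict (Set.Ici (0:ℝ)) :=
    Measure.restrict_mono hsub le_rfl
  set f := fun y => |t1 y| * Real.sqrt (w y) with hf
  set g := fun y => Real.sqrt ((w y)^(-(1:ℝ))) with hg
  have h1' : AEStronglyMeasurable t1 (volume.restrict (Ioi x)) := h1.mono_measure hres
  have hwm' : AEStronglyMeasurable w (volume.restrict (Ioi x)) :=
    (wmeas hwC1).mono_measure hres
  have hfm : AEStronglyMeasurable f (volume.restrict (Ioi x)) :=
    (continuous_abs.comp_aestronglyMeasurable h1').mul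
      (Real.continuous_sqrt.comp_aestronglyMeasurable hwm')
  have hgm : AEStronglyMeasurable g (volume.restrict (Ioi x)) :=
    Real.continuous_sqrt.comp_aestronglyMeasurable
      ((wrpow_meas hw1 hwC1 _).mono_measure hres)
  have hae : ∀ᵐ y ∂(volume.restrict (Ioi x)), y ∈ Ioi x :=
    ae_restrict_of_forall_mem measurableSet_Ioi fun y hy => hy
  have hfsq : Integrable (fun y => f y ^ 2) (volume.restrict (Ioi x)) := by
    refine ((hsq.mono_set hsub)).congr ?_
    filter_upwards [hae] with y hy
    have : (0:ℝ) ≤ w y := by linarith [hw1 y (hsub hy)]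
    simp only [hf, mul_pow, sq_abs, Real.sq_sqrt this]
  have hgsq : Integrable (fun y => g y ^ 2) (volume.restrict (Ioi x)) := by
    refine ((winv_int hw1 hwC1 hw13).mono_set hsub).congr ?_
    filter_upwards [hae] with y hy
    have : (0:ℝ) ≤ w y := by linarith [hw1 y (hsub hy)]
    simp only [hg, Real.sq_sqrt (Real.rpow_nonneg this _)]
  have hfL : MemLp f (ENNReal.ofReal (2:ℝ)) (volume.restrict (Ioi x)) := by
    rw [show ENNReal.ofReal (2:ℝ) = 2 by norm_num]
    exact (memLp_two_iff_integrable_sq hfm).2 hfsq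
  have hgL : MemLp g (ENNReal.ofReal (2:ℝ)) (volume.restrict (Ioi x)) := by
    rw [show ENNReal.ofReal (2:ℝ) = 2 by norm_num]
    exact (memLp_two_iff_integrable_sq hgm).2 hgsq
  have hpq : Real.HolderConjugate 2 2 := ⟨by norm_num, by norm_num, by norm_num⟩
  have hfn : 0 ≤ᵐ[volume.restrict (Ioi x)] f :=
    Filter.Eventually.of_forall fun y => by positivity
  have hgn : 0 ≤ᵐ[volume.restrict (Ioi x)] g :=
    Filter.Eventually.of_forall fun y => Real.sqrt_nonneg _
  have key := integral_mul_le_Lp_mul_Lq_of_nonneg hpq hfn hgn hfL hgL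
  have e1 : ∫ y in Ioi x, f y * g y = ∫ y in Ioi x, |t1 y| := by
    refine integral_congr_ae ?_
    filter_upwards [hae] with y hy
    have hwy : (0:ℝ) < w y := lt_of_lt_of_le one_pos (hw1 y (hsub hy))
    have : Real.sqrt (w y) * g y = 1 := by
      show Real.sqrt (w y) * Real.sqrt ((w y) ^ (-(1:ℝ))) = 1
      rw [Real.rpow_neg_one, Real.sqrt_inv,
        mul_inv_cancel₀ (ne_of_gt (Real.sqrt_pos.2 hwy))]
    calc f y * g y = |t1 y| * (Real.sqrt (w y) * g y) := by rw [hf]; ring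
      _ = |t1 y| := by rw [this, mul_one]
  have e2 : ∫ y in Ioi x, f y ^ (2:ℝ) = ∫ y in Ioi x, (t1 y)^2 * w y := by
    refine integral_congr_ae ?_
    filter_upwards [hae] with y hy
    have hwy : (0:ℝ) ≤ w y := by linarith [hw1 y (hsub hy)]
    show f y ^ (2:ℝ) = _
    rw [Real.rpow_two, hf]
    simp only []
    rw [mul_pow, sq_abs, Real.sq_sqrt hwy]
  have e3 : ∫ y in Ioi x, g y ^ (2:ℝ) = ∫ y in Ioi x, (w y)^(-(1:ℝ)) := by
    refine integral_congr_ae ?_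
    filter_upwards [hae] with y hy
    have hwy : (0:ℝ) ≤ w y := by linarith [hw1 y (hsub hy)]
    show g y ^ (2:ℝ) = _
    rw [Real.rpow_two, hg]
    simp only []
    rw [Real.sq_sqrt (Real.rpow_nonneg hwy _)]
  rw [e1, e2, e3] at key
  calc ∫ y in Ioi x, |t1 y| ≤ (∫ y in Ioi x, (t1 y)^2 * w y) ^ ((1:ℝ)/2) *
      (∫ y in Ioi x, (w y)^(-(1:ℝ))) ^ ((1:ℝ)/2) := key
    _ = _ := by rw [← Real.sqrt_eq_rpow, ← Real.sqrt_eq_rpow]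

lemma theta_repr (ht_int : IntegrableOn t1 (Set.Ici 0))
    (hrepr : ∀ x y : ℝ, 0 ≤ y → y ≤ x → θ x - θ y = ∫ z in y..x, t1 z)
    (hlim : Tendsto θ atTop (𝓝 0))
    {x : ℝ} (hx : 0 ≤ x) :
    θ x = -∫ y in Ioi x, t1 y := by
  have hIoi0 : IntegrableOn t1 (Ioi 0) := ht_int.mono_set Ioi_subset_Ici_self
  have htend : Tendsto (fun b => ∫ z in (0:ℝ)..b, t1 z) atTop
      (𝓝 (∫ z in Ioi (0:ℝ), t1 z)) :=
    intervalIntegral_tendsto_integral_Ioi 0 hIoi0 tendsto_id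
  have htend2 : Tendsto θ atTop (𝓝 (θ 0 + ∫ z in Ioi (0:ℝ), t1 z)) := by
    refine ((tendsto_const_nhds (x := θ 0)).add htend).congr' ?_
    filter_upwards [eventually_ge_atTop (0:ℝ)] with b hb
    have := hrepr b 0 le_rfl hb; linarith
  have h0 : θ 0 + ∫ z in Ioi (0:ℝ), t1 z = 0 := tendsto_nhds_unique htend2 hlim
  have hsplit : ∫ z in Ioi (0:ℝ), t1 z =
      (∫ z in Ioc 0 x, t1 z) + ∫ z in Ioi x, t1 z := by
    rw [← setIntegral_union (Ioc_disjoint_Ioi le_rfl) measurableSet_Ioi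
      (ht_int.mono_set fun z hz => le_of_lt hz.1)
      (ht_int.mono_set fun z hz => le_trans hx (le_of_lt hz)),
      Ioc_union_Ioi_eq_Ioi hx]
  have hx0 := hrepr x 0 le_rfl hx
  rw [intervalIntegral.integral_of_le hx] at hx0
  linarith

lemma decay (hw1 : ∀ x ∈ Set.Ici (0:ℝ), 1 ≤ w x)
    (hwmono : MonotoneOn w (Set.Ici 0))
    (hwC1 : ContDiffOn ℝ 1 w (Set.Ici 0))
    (hw13 : IntegrableOn (fun x => (w x) ^ (-(1/3 : ℝ))) (Set.Ici 0))
    (h1 : AEStronglyMeasurable t1 (volume.restrict (Set.Ici (0:ℝ))))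
    (hsq : IntegrableOn (fun x => (t1 x)^2 * w x) (Set.Ici 0))
    (ht_int : IntegrableOn t1 (Set.Ici 0))
    (hrepr : ∀ x y : ℝ, 0 ≤ y → y ≤ x → θ x - θ y = ∫ z in y..x, t1 z)
    (hlim : Tendsto θ atTop (𝓝 0))
    {x : ℝ} (hx : 0 ≤ x) :
    |θ x| ≤ Real.sqrt (∫ y in Ici (0:ℝ), (t1 y)^2 * w y) *
      Real.sqrt (∫ y in Ici (0:ℝ), (w y)^(-(1/3):ℝ)) * (w x)^(-(1/3):ℝ) := by
  have hwx : (0:ℝ) < w x := lt_of_lt_of_le one_pos (hw1 x hx)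
  have h0 : θ x = -∫ y in Ioi x, t1 y := theta_repr ht_int hrepr hlim hx
  have h2 : |θ x| ≤ ∫ y in Ioi x, |t1 y| := by
    rw [h0, abs_neg]
    simpa [Real.norm_eq_abs] using
      norm_integral_le_integral_norm (μ := volume.restrict (Ioi x)) t1
  have h3 := tail_cs hw1 hwC1 hw13 h1 hsq hx
  have htailA : ∫ y in Ioi x, (t1 y)^2 * w y ≤ ∫ y in Ici (0:ℝ), (t1 y)^2 * w y := by
    refine setIntegral_mono_set hsq
      (ae_restrict_of_forall_mem measurableSet_Ici fun y hy => ?_)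
      (HasSubset.Subset.eventuallyLE fun y hy => le_trans hx (le_of_lt hy))
    have : (1:ℝ) ≤ w y := hw1 y hy
    positivity
  have htailB := tail1_le hw1 hwmono hwC1 hw13 hx
  have hc13 : (0:ℝ) ≤ ∫ y in Ici (0:ℝ), (w y)^(-(1/3):ℝ) := by
    refine setIntegral_nonneg measurableSet_Ici fun y hy => ?_
    exact Real.rpow_nonneg (by linarith [hw1 y hy]) _
  have hsq23 : Real.sqrt ((w x)^(-(2/3):ℝ)) = (w x)^(-(1/3):ℝ) := by
    rw [show (w x)^(-(2/3):ℝ) = ((w x)^(-(1/3):ℝ))^2 by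
      rw [← Real.rpow_natCast ((w x)^(-(1/3):ℝ)) 2, ← Real.rpow_mul (le_of_lt hwx)]
      norm_num]
    exact Real.sqrt_sq (Real.rpow_nonneg (le_of_lt hwx) _)
  calc |θ x| ≤ ∫ y in Ioi x, |t1 y| := h2
    _ ≤ Real.sqrt (∫ y in Ioi x, (t1 y)^2 * w y) *
        Real.sqrt (∫ y in Ioi x, (w y)^(-(1:ℝ))) := h3
    _ ≤ Real.sqrt (∫ y in Ici (0:ℝ), (t1 y)^2 * w y) *
        Real.sqrt ((∫ y in Ici (0:ℝ), (w y)^(-(1/3):ℝ)) * (w x)^(-(2/3):ℝ)) := by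
        exact mul_le_mul (Real.sqrt_le_sqrt htailA) (Real.sqrt_le_sqrt htailB)
          (Real.sqrt_nonneg _) (Real.sqrt_nonneg _)
    _ = _ := by
        rw [Real.sqrt_mul hc13, hsq23, mul_assoc]

lemma theta_contOn
    (ht_int : IntegrableOn t1 (Set.Ici 0))
    (hrepr : ∀ x y : ℝ, 0 ≤ y → y ≤ x → θ x - θ y = ∫ z in y..x, t1 z) :
    ContinuousOn θ (Set.Ici 0) := by
  set tt := (Set.Ici (0:ℝ)).indicator t1 with htt_def
  have htt : Integrable tt := (integrable_indicator_iff measurableSet_Ici).2 ht_int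
  have hP : Continuous fun b => θ 0 + ∫ z in (0:ℝ)..b, tt z :=
    continuous_const.add (htt.continuous_primitive 0)
  refine hP.continuousOn.congr fun x hx => ?_
  have h1 : (∫ z in (0:ℝ)..x, tt z) = ∫ z in (0:ℝ)..x, t1 z := by
    refine intervalIntegral.integral_congr fun z hz => ?_
    rw [uIcc_of_le hx] at hz
    exact Set.indicator_of_mem (mem_Ici.2 hz.1) t1
  have h2 := hrepr x 0 le_rfl hx
  simp only [h1]
  linarith

lemma theta_int (hw13 : IntegrableOn (fun x => (w x) ^ (-(1/3 : ℝ))) (Set.Ici 0))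
    (hcont : ContinuousOn θ (Set.Ici 0)) {K : ℝ}
    (hdecay : ∀ x, 0 ≤ x → |θ x| ≤ K * (w x)^(-(1/3):ℝ)) :
    IntegrableOn θ (Set.Ici 0) := by
  refine (hw13.const_mul K).mono'
    (hcont.aestronglyMeasurable measurableSet_Ici)
    (ae_restrict_of_forall_mem measurableSet_Ici fun x hx => ?_)
  rw [Real.norm_eq_abs]
  exact hdecay x hx

lemma theta_abs_int_le
    (hw13 : IntegrableOn (fun x => (w x) ^ (-(1/3 : ℝ))) (Set.Ici 0))
    (hθ : IntegrableOn θ (Set.Ici 0)) {K : ℝ}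
    (hdecay : ∀ x, 0 ≤ x → |θ x| ≤ K * (w x)^(-(1/3):ℝ)) :
    ∫ y in Ici (0:ℝ), |θ y| ≤ K * ∫ y in Ici (0:ℝ), (w y)^(-(1/3):ℝ) := by
  rw [← integral_const_mul]
  exact integral_mono_ae hθ.abs (hw13.const_mul K)
    (ae_restrict_of_forall_mem measurableSet_Ici fun x hx => hdecay x hx)

lemma F_bound (hθ : IntegrableOn θ (Set.Ici 0)) {x : ℝ} (hx : 0 ≤ x) :
    |∫ y in (0:ℝ)..x, θ y| ≤ ∫ y in Ici (0:ℝ), |θ y| := by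
  rw [intervalIntegral.integral_of_le hx]
  calc |∫ y in Ioc (0:ℝ) x, θ y| ≤ ∫ y in Ioc (0:ℝ) x, |θ y| := by
        simpa [Real.norm_eq_abs] using
          norm_integral_le_integral_norm (μ := volume.restrict (Ioc (0:ℝ) x)) θ
    _ ≤ ∫ y in Ici (0:ℝ), |θ y| := by
        refine setIntegral_mono_set hθ.abs
          (Filter.Eventually.of_forall fun y => abs_nonneg _)
          (HasSubset.Subset.eventuallyLE fun y hy => le_of_lt hy.1)

lemma package (hw1 : ∀ x ∈ Set.Ici (0:ℝ), 1 ≤ w x)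
    (hwmono : MonotoneOn w (Set.Ici 0))
    (hwC1 : ContDiffOn ℝ 1 w (Set.Ici 0))
    (hw13 : IntegrableOn (fun x => (w x) ^ (-(1/3 : ℝ))) (Set.Ici 0))
    (hU : MemU w θ t1 t2) (hlim : Tendsto θ atTop (𝓝 0)) :
    IntegrableOn θ (Set.Ici 0) ∧
    (∀ x, 0 ≤ x → |θ x| ≤
      Real.sqrt ((∫ y in Ici (0:ℝ), ((t1 y)^2 + (t2 y)^2) * w y) *
        (∫ y in Ici (0:ℝ), (w y)^(-(1/3):ℝ))) * (w x)^(-(1/3):ℝ)) ∧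
    (∀ x, 0 ≤ x → |∫ y in (0:ℝ)..x, θ y| ≤
      Real.sqrt ((∫ y in Ici (0:ℝ), ((t1 y)^2 + (t2 y)^2) * w y) *
        (∫ y in Ici (0:ℝ), (w y)^(-(1/3):ℝ))) *
        (∫ y in Ici (0:ℝ), (w y)^(-(1/3):ℝ))) := by
  obtain ⟨⟨hloc1, hrepr⟩, ⟨hloc2, hrepr2⟩, hI⟩ := hU
  have h1 : AEStronglyMeasurable t1 (volume.restrict (Set.Ici (0:ℝ))) :=
    hloc1.aestronglyMeasurable
  have hsq : IntegrableOn (fun x => (t1 x)^2 * w x) (Set.Ici 0) :=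
    sq_int_left hw1 hwC1 h1 hI
  have ht_int : IntegrableOn t1 (Set.Ici 0) := deriv_int hw1 hwC1 hw13 h1 hI
  have hAJ : ∫ y in Ici (0:ℝ), (t1 y)^2 * w y ≤
      ∫ y in Ici (0:ℝ), ((t1 y)^2 + (t2 y)^2) * w y := by
    refine integral_mono_ae hsq hI
      (ae_restrict_of_forall_mem measurableSet_Ici fun y hy => ?_)
    have h0 : (0:ℝ) ≤ w y := by linarith [hw1 y hy]
    have h2 : (0:ℝ) ≤ (t2 y)^2 * w y := mul_nonneg (sq_nonneg _) h0
    show t1 y ^ 2 * w y ≤ (t1 y ^ 2 + t2 y ^ 2) * w y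
    nlinarith
  have hc13 : (0:ℝ) ≤ ∫ y in Ici (0:ℝ), (w y)^(-(1/3):ℝ) :=
    setIntegral_nonneg measurableSet_Ici fun y hy =>
      Real.rpow_nonneg (by linarith [hw1 y hy]) _
  have hAnn : (0:ℝ) ≤ ∫ y in Ici (0:ℝ), (t1 y)^2 * w y := by
    refine setIntegral_nonneg measurableSet_Ici fun y hy => ?_
    have : (1:ℝ) ≤ w y := hw1 y hy
    positivity
  have hdecay : ∀ x, 0 ≤ x → |θ x| ≤
      Real.sqrt ((∫ y in Ici (0:ℝ), ((t1 y)^2 + (t2 y)^2) * w y) *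
        (∫ y in Ici (0:ℝ), (w y)^(-(1/3):ℝ))) * (w x)^(-(1/3):ℝ) := by
    intro x hx
    refine le_trans (decay hw1 hwmono hwC1 hw13 h1 hsq ht_int hrepr hlim hx) ?_
    have hwx : (0:ℝ) < w x := lt_of_lt_of_le one_pos (hw1 x hx)
    refine mul_le_mul_of_nonneg_right ?_ (Real.rpow_nonneg (le_of_lt hwx) _)
    rw [Real.sqrt_mul (le_trans hAnn hAJ)]
    exact mul_le_mul_of_nonneg_right (Real.sqrt_le_sqrt hAJ) (Real.sqrt_nonneg _)
  have hcont : ContinuousOn θ (Set.Ici 0) := theta_contOn ht_int hrepr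
  have hθ : IntegrableOn θ (Set.Ici 0) := theta_int hw13 hcont hdecay
  refine ⟨hθ, hdecay, fun x hx => ?_⟩
  exact le_trans (F_bound hθ hx) (theta_abs_int_le hw13 hθ hdecay)

lemma intervalInt_of_loc {f : ℝ → ℝ} (hf : LocallyIntegrableOn f (Set.Ici 0))
    {x y : ℝ} (hy : 0 ≤ y) (hxy : y ≤ x) : IntervalIntegrable f volume y x := by
  refine MeasureTheory.IntegrableOn.intervalIntegrable ?_
  rw [uIcc_of_le hxy]
  exact hf.integrableOn_compact_subset
    (fun z hz => le_trans hy hz.1) isCompact_Icc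

lemma memU_sub (hw1 : ∀ x ∈ Set.Ici (0:ℝ), 1 ≤ w x)
    (hwC1 : ContDiffOn ℝ 1 w (Set.Ici 0))
    {φ a1 a2 ψ b1 b2 : ℝ → ℝ}
    (hφU : MemU w φ a1 a2) (hψU : MemU w ψ b1 b2) :
    MemU w (fun x => φ x - ψ x) (fun x => a1 x - b1 x)
      (fun x => a2 x - b2 x) := by
  obtain ⟨⟨hla, hra⟩, ⟨hla2, hra2⟩, hIa⟩ := hφU
  obtain ⟨⟨hlb, hrb⟩, ⟨hlb2, hrb2⟩, hIb⟩ := hψU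
  refine ⟨⟨hla.sub hlb, fun x y hy hxy => ?_⟩,
    ⟨hla2.sub hlb2, fun x y hy hxy => ?_⟩, ?_⟩
  · have h1 := hra x y hy hxy
    have h2 := hrb x y hy hxy
    have e : (∫ z in y..x, a1 z - b1 z) =
        (∫ z in y..x, a1 z) - ∫ z in y..x, b1 z :=
      intervalIntegral.integral_sub (intervalInt_of_loc hla hy hxy)
        (intervalInt_of_loc hlb hy hxy)
    simp only []
    rw [e]; linarith
  · have h1 := hra2 x y hy hxy
    have h2 := hrb2 x y hy hxy
    have e : (∫ z in y..x, a2 z - b2 z) =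
        (∫ z in y..x, a2 z) - ∫ z in y..x, b2 z :=
      intervalIntegral.integral_sub (intervalInt_of_loc hla2 hy hxy)
        (intervalInt_of_loc hlb2 hy hxy)
    simp only []
    rw [e]; linarith
  · have a1m := hla.aestronglyMeasurable
    have a2m := hla2.aestronglyMeasurable
    have b1m := hlb.aestronglyMeasurable
    have b2m := hlb2.aestronglyMeasurable
    have wm := wmeas hwC1
    have hmeas : AEStronglyMeasurable
        (fun x => ((a1 x - b1 x) ^ 2 + (a2 x - b2 x) ^ 2) * w x)
        (volume.restrict (Set.Ici (0:ℝ))) := by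
      refine ((((a1m.sub b1m).mul (a1m.sub b1m)).add
        ((a2m.sub b2m).mul (a2m.sub b2m))).mul wm).congr
        (Filter.Eventually.of_forall fun x => ?_)
      simp only [Pi.mul_apply, Pi.add_apply, Pi.sub_apply]
      ring
    have hg : IntegrableOn (fun x =>
        2 * (((a1 x)^2 + (a2 x)^2) * w x) + 2 * (((b1 x)^2 + (b2 x)^2) * w x))
        (Set.Ici 0) := (hIa.const_mul 2).add (hIb.const_mul 2)
    refine hg.mono' hmeas
      (ae_restrict_of_forall_mem measurableSet_Ici fun x hx => ?_)
    have hw : (0:ℝ) ≤ w x := by linarith [hw1 x hx]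
    have h1 : (0:ℝ) ≤ ((a1 x - b1 x) ^ 2 + (a2 x - b2 x) ^ 2) * w x := by positivity
    rw [Real.norm_of_nonneg h1]
    nlinarith [sq_nonneg (a1 x + b1 x), sq_nonneg (a2 x + b2 x),
      mul_nonneg (add_nonneg (sq_nonneg (a1 x + b1 x)) (sq_nonneg (a2 x + b2 x))) hw]

end Stmt11Aux

section Stmt11Main
variable {w : ℝ → ℝ}

lemma UNorm_sq (hw0 : ∀ x ∈ Set.Ici (0:ℝ), 0 ≤ w x) (f d1 d2 : ℝ → ℝ) :
    UNorm w f d1 d2 ^ 2 =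
      (f 0) ^ 2 + (d1 0) ^ 2 +
        ∫ x in Set.Ici (0:ℝ), ((d1 x) ^ 2 + (d2 x) ^ 2) * w x := by
  have h : 0 ≤ ∫ x in Set.Ici (0:ℝ), ((d1 x) ^ 2 + (d2 x) ^ 2) * w x :=
    setIntegral_nonneg measurableSet_Ici fun y hy =>
      mul_nonneg (by positivity) (hw0 y hy)
  rw [UNorm, Real.sq_sqrt (by positivity)]

set_option maxHeartbeats 2000000 in
/-- local Lipschitz estimate
`‖Sφ − Sψ‖_U² ≤ C(‖φ‖_U² + ‖ψ‖_U²)‖φ − ψ‖_U²` for the HJM drift building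
block `Sφ(x) = φ(x)∫₀ˣ φ(y) dy`. -/
theorem stmt_11
    (w : ℝ → ℝ)
    (hw1 : ∀ x ∈ Set.Ici (0:ℝ), 1 ≤ w x)
    (hwmono : MonotoneOn w (Set.Ici 0))
    (hwC1 : ContDiffOn ℝ 1 w (Set.Ici 0))
    (hw13 : IntegrableOn (fun x => (w x) ^ (-(1/3 : ℝ))) (Set.Ici 0)) :
    ∃ C > 0, ∀ φ a1 a2 ψ b1 b2 : ℝ → ℝ,
      MemU w φ a1 a2 → MemU w ψ b1 b2 →
      Tendsto φ atTop (𝓝 0) → Tendsto ψ atTop (𝓝 0) →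
      (UNorm w
          (fun x => φ x * (∫ y in (0:ℝ)..x, φ y) -
            ψ x * ∫ y in (0:ℝ)..x, ψ y)
          (fun x => (a1 x * (∫ y in (0:ℝ)..x, φ y) + (φ x) ^ 2) -
            (b1 x * (∫ y in (0:ℝ)..x, ψ y) + (ψ x) ^ 2))
          (fun x => (a2 x * (∫ y in (0:ℝ)..x, φ y) + 3 * φ x * a1 x) -
            (b2 x * (∫ y in (0:ℝ)..x, ψ y) + 3 * ψ x * b1 x))) ^ 2 ≤
        C * ((UNorm w φ a1 a2) ^ 2 + (UNorm w ψ b1 b2) ^ 2) *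
          (UNorm w (fun x => φ x - ψ x) (fun x => a1 x - b1 x)
            (fun x => a2 x - b2 x)) ^ 2 := by
  have hw0 : ∀ x ∈ Set.Ici (0:ℝ), 0 ≤ w x := fun x hx => by linarith [hw1 x hx]
  have hc13nn : 0 ≤ ∫ x in Set.Ici (0:ℝ), (w x) ^ (-(1/3:ℝ)) :=
    setIntegral_nonneg measurableSet_Ici fun y hy =>
      Real.rpow_nonneg (hw0 y hy) _
  refine ⟨100 * (max 1 (∫ x in Set.Ici (0:ℝ), (w x) ^ (-(1/3:ℝ))))^3,
    by positivity, ?_⟩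
  intro φ a1 a2 ψ b1 b2 hφU hψU hφlim hψlim
  have hδU := memU_sub hw1 hwC1 hφU hψU
  have hδlim : Tendsto (fun x => φ x - ψ x) atTop (𝓝 0) := by
    simpa using hφlim.sub hψlim
  obtain ⟨hφint, hφdecay, hφF⟩ := package hw1 hwmono hwC1 hw13 hφU hφlim
  obtain ⟨hψint, hψdecay, hψF⟩ := package hw1 hwmono hwC1 hw13 hψU hψlim
  obtain ⟨hδint, hδdecay, hδF⟩ := package hw1 hwmono hwC1 hw13 hδU hδlim
  set c13 : ℝ := ∫ x in Set.Ici (0:ℝ), (w x) ^ (-(1/3:ℝ)) with hc13def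
  set c : ℝ := max 1 c13 with hcdef
  have hc1 : (1:ℝ) ≤ c := le_max_left _ _
  have hc13c : c13 ≤ c := le_max_right _ _
  have hc0 : (0:ℝ) < c := lt_of_lt_of_le one_pos hc1
  set Jφ : ℝ := ∫ x in Set.Ici (0:ℝ), ((a1 x)^2 + (a2 x)^2) * w x with hJφdef
  set Jψ : ℝ := ∫ x in Set.Ici (0:ℝ), ((b1 x)^2 + (b2 x)^2) * w x with hJψdef
  set Jδ : ℝ := ∫ x in Set.Ici (0:ℝ),
    ((a1 x - b1 x)^2 + (a2 x - b2 x)^2) * w x with hJδdef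
  have hJφnn : 0 ≤ Jφ := setIntegral_nonneg measurableSet_Ici fun y hy =>
    mul_nonneg (by positivity) (hw0 y hy)
  have hJψnn : 0 ≤ Jψ := setIntegral_nonneg measurableSet_Ici fun y hy =>
    mul_nonneg (by positivity) (hw0 y hy)
  have hJδnn : 0 ≤ Jδ := setIntegral_nonneg measurableSet_Ici fun y hy =>
    mul_nonneg (by positivity) (hw0 y hy)
  have hδI : IntegrableOn (fun x =>
      ((a1 x - b1 x)^2 + (a2 x - b2 x)^2) * w x) (Set.Ici 0) := hδU.2.2
  -- the three building-block integrands
  -- main integral estimate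
  have hIS : (∫ x in Set.Ici (0:ℝ),
      (((a1 x * (∫ y in (0:ℝ)..x, φ y) + (φ x) ^ 2) -
        (b1 x * (∫ y in (0:ℝ)..x, ψ y) + (ψ x) ^ 2)) ^ 2 +
       ((a2 x * (∫ y in (0:ℝ)..x, φ y) + 3 * φ x * a1 x) -
        (b2 x * (∫ y in (0:ℝ)..x, ψ y) + 3 * ψ x * b1 x)) ^ 2) * w x)
      ≤ 86 * c^3 * ((Jφ + Jψ) * Jδ) := by
    have hptwise : ∀ x ∈ Set.Ici (0:ℝ),
        (((a1 x * (∫ y in (0:ℝ)..x, φ y) + (φ x) ^ 2) -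
          (b1 x * (∫ y in (0:ℝ)..x, ψ y) + (ψ x) ^ 2)) ^ 2 +
         ((a2 x * (∫ y in (0:ℝ)..x, φ y) + 3 * φ x * a1 x) -
          (b2 x * (∫ y in (0:ℝ)..x, ψ y) + 3 * ψ x * b1 x)) ^ 2) * w x ≤
        (4*(c^3*Jφ) + 36*(c*Jψ)) * (((a1 x - b1 x)^2 + (a2 x - b2 x)^2) * w x)
        + 4*(c^3*Jδ) * (((b1 x)^2 + (b2 x)^2) * w x)
        + 36*(c*Jδ) * (((a1 x)^2 + (a2 x)^2) * w x)
        + 6*(c^2*((Jφ+Jψ)*Jδ)) * (w x)^(-(1/3):ℝ) := by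
      intro x hx
      have hx0 : (0:ℝ) ≤ x := hx
      have hW1 : (1:ℝ) ≤ w x := hw1 x hx
      have hW0 : (0:ℝ) ≤ w x := by linarith
      have hWpos : (0:ℝ) < w x := by linarith
      set ω : ℝ := (w x)^(-(1/3):ℝ) with hωdef
      have hω0 : 0 ≤ ω := Real.rpow_nonneg hW0 _
      have hω1 : ω ≤ 1 := Real.rpow_le_one_of_one_le_of_nonpos hW1 (by norm_num)
      have hω2 : ω^2 ≤ 1 := by nlinarith
      have hω3 : ω^3 * w x = 1 := by
        have e : ω^(3:ℕ) = (w x)^(-(1:ℝ)) := by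
          rw [hωdef, ← Real.rpow_natCast ((w x)^(-(1/3):ℝ)) 3,
            ← Real.rpow_mul hW0]
          norm_num
        rw [e, Real.rpow_neg_one]
        exact inv_mul_cancel₀ (ne_of_gt hWpos)
      have hφIcc : IntegrableOn φ (Set.uIcc 0 x) := by
        rw [uIcc_of_le hx0]; exact hφint.mono_set (fun z hz => hz.1)
      have hψIcc : IntegrableOn ψ (Set.uIcc 0 x) := by
        rw [uIcc_of_le hx0]; exact hψint.mono_set (fun z hz => hz.1)
      set Fφ : ℝ := ∫ y in (0:ℝ)..x, φ y with hFφdef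
      set Fψ : ℝ := ∫ y in (0:ℝ)..x, ψ y with hFψdef
      set Fδ : ℝ := ∫ y in (0:ℝ)..x, (φ y - ψ y) with hFδdef
      have hFsub : Fδ = Fφ - Fψ :=
        intervalIntegral.integral_sub hφIcc.intervalIntegrable
          hψIcc.intervalIntegrable
      have hsqrtφ : (Real.sqrt (Jφ * c13))^2 = Jφ * c13 :=
        Real.sq_sqrt (mul_nonneg hJφnn hc13nn)
      have hsqrtψ : (Real.sqrt (Jψ * c13))^2 = Jψ * c13 :=
        Real.sq_sqrt (mul_nonneg hJψnn hc13nn)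
      have hsqrtδ : (Real.sqrt (Jδ * c13))^2 = Jδ * c13 :=
        Real.sq_sqrt (mul_nonneg hJδnn hc13nn)
      have hc13cube : c13^3 ≤ c^3 := pow_le_pow_left₀ hc13nn hc13c 3
      have hFφsq : Fφ^2 ≤ c^3 * Jφ := by
        have h := hφF x hx0
        have h2 : Fφ^2 ≤ (Real.sqrt (Jφ*c13)*c13)^2 := by
          rw [← sq_abs]; exact pow_le_pow_left₀ (abs_nonneg _) h 2
        have h3 : (Real.sqrt (Jφ*c13)*c13)^2 = Jφ * c13^3 := by
          rw [mul_pow, hsqrtφ]; ring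
        linarith [mul_le_mul_of_nonneg_left hc13cube hJφnn]
      have hFδsq : Fδ^2 ≤ c^3 * Jδ := by
        have h := hδF x hx0
        have h2 : Fδ^2 ≤ (Real.sqrt (Jδ*c13)*c13)^2 := by
          rw [← sq_abs]; exact pow_le_pow_left₀ (abs_nonneg _) h 2
        have h3 : (Real.sqrt (Jδ*c13)*c13)^2 = Jδ * c13^3 := by
          rw [mul_pow, hsqrtδ]; ring
        linarith [mul_le_mul_of_nonneg_left hc13cube hJδnn]
      have hφsq : (φ x)^2 ≤ c * Jφ * ω^2 := by
        have h := hφdecay x hx0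
        have h2 : (φ x)^2 ≤ (Real.sqrt (Jφ*c13)*ω)^2 := by
          rw [← sq_abs]; exact pow_le_pow_left₀ (abs_nonneg _) h 2
        have h3 : (Real.sqrt (Jφ*c13)*ω)^2 = Jφ*c13*ω^2 := by
          rw [mul_pow, hsqrtφ]
        linarith [mul_nonneg (mul_nonneg hJφnn (sub_nonneg.2 hc13c)) (sq_nonneg ω)]
      have hψsq : (ψ x)^2 ≤ c * Jψ * ω^2 := by
        have h := hψdecay x hx0
        have h2 : (ψ x)^2 ≤ (Real.sqrt (Jψ*c13)*ω)^2 := by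
          rw [← sq_abs]; exact pow_le_pow_left₀ (abs_nonneg _) h 2
        have h3 : (Real.sqrt (Jψ*c13)*ω)^2 = Jψ*c13*ω^2 := by
          rw [mul_pow, hsqrtψ]
        linarith [mul_nonneg (mul_nonneg hJψnn (sub_nonneg.2 hc13c)) (sq_nonneg ω)]
      have hδsq : (φ x - ψ x)^2 ≤ c * Jδ * ω^2 := by
        have h := hδdecay x hx0
        have h2 : (φ x - ψ x)^2 ≤ (Real.sqrt (Jδ*c13)*ω)^2 := by
          rw [← sq_abs]; exact pow_le_pow_left₀ (abs_nonneg _) h 2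
        have h3 : (Real.sqrt (Jδ*c13)*ω)^2 = Jδ*c13*ω^2 := by
          rw [mul_pow, hsqrtδ]
        linarith [mul_nonneg (mul_nonneg hJδnn (sub_nonneg.2 hc13c)) (sq_nonneg ω)]
      have hD1 : a1 x * Fφ + φ x ^ 2 - (b1 x * Fψ + ψ x ^ 2)
          = (a1 x - b1 x) * Fφ + b1 x * Fδ + (φ x + ψ x) * (φ x - ψ x) := by
        rw [hFsub]; ring
      have hD2 : a2 x * Fφ + 3 * φ x * a1 x - (b2 x * Fψ + 3 * ψ x * b1 x)
          = (a2 x - b2 x) * Fφ + b2 x * Fδ + 3 * (φ x - ψ x) * a1 x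
            + 3 * ψ x * (a1 x - b1 x) := by
        rw [hFsub]; ring
      rw [hD1, hD2]
      have hq1 : ((a1 x - b1 x) * Fφ + b1 x * Fδ + (φ x + ψ x) * (φ x - ψ x))^2
          ≤ 3*((a1 x - b1 x)^2*Fφ^2) + 3*((b1 x)^2*Fδ^2)
            + 3*((φ x + ψ x)^2*(φ x - ψ x)^2) := by
        linarith [sq_nonneg ((a1 x - b1 x)*Fφ - b1 x*Fδ),
          sq_nonneg ((a1 x - b1 x)*Fφ - (φ x + ψ x)*(φ x - ψ x)),
          sq_nonneg (b1 x*Fδ - (φ x + ψ x)*(φ x - ψ x))]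
      have hq2 : ((a2 x - b2 x) * Fφ + b2 x * Fδ + 3 * (φ x - ψ x) * a1 x
            + 3 * ψ x * (a1 x - b1 x))^2
          ≤ 4*((a2 x - b2 x)^2*Fφ^2) + 4*((b2 x)^2*Fδ^2)
            + 36*((φ x - ψ x)^2*(a1 x)^2) + 36*((ψ x)^2*(a1 x - b1 x)^2) := by
        linarith [sq_nonneg ((a2 x - b2 x)*Fφ - b2 x*Fδ),
          sq_nonneg ((a2 x - b2 x)*Fφ - 3*(φ x - ψ x)*a1 x),
          sq_nonneg ((a2 x - b2 x)*Fφ - 3*ψ x*(a1 x - b1 x)),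
          sq_nonneg (b2 x*Fδ - 3*(φ x - ψ x)*a1 x),
          sq_nonneg (b2 x*Fδ - 3*ψ x*(a1 x - b1 x)),
          sq_nonneg (3*(φ x - ψ x)*a1 x - 3*ψ x*(a1 x - b1 x))]
      have k1 := mul_le_mul_of_nonneg_right hq1 hW0
      have k2 := mul_le_mul_of_nonneg_right hq2 hW0
      have hB1 : (a1 x - b1 x)^2*Fφ^2 * w x ≤ c^3*Jφ * ((a1 x - b1 x)^2 * w x) := by
        linarith [mul_nonneg (sub_nonneg.2 hFφsq)
          (mul_nonneg (sq_nonneg (a1 x - b1 x)) hW0)]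
      have hB4 : (a2 x - b2 x)^2*Fφ^2 * w x ≤ c^3*Jφ * ((a2 x - b2 x)^2 * w x) := by
        linarith [mul_nonneg (sub_nonneg.2 hFφsq)
          (mul_nonneg (sq_nonneg (a2 x - b2 x)) hW0)]
      have hB2 : (b1 x)^2*Fδ^2 * w x ≤ c^3*Jδ * ((b1 x)^2 * w x) := by
        linarith [mul_nonneg (sub_nonneg.2 hFδsq)
          (mul_nonneg (sq_nonneg (b1 x)) hW0)]
      have hB5 : (b2 x)^2*Fδ^2 * w x ≤ c^3*Jδ * ((b2 x)^2 * w x) := by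
        linarith [mul_nonneg (sub_nonneg.2 hFδsq)
          (mul_nonneg (sq_nonneg (b2 x)) hW0)]
      have hB3 : (φ x + ψ x)^2*(φ x - ψ x)^2 * w x
          ≤ 2*(c^2*((Jφ+Jψ)*Jδ)) * ω := by
        have hsum : (φ x + ψ x)^2 ≤ 2*c*(Jφ+Jψ)*ω^2 := by
          linarith [hφsq, hψsq, sq_nonneg (φ x - ψ x)]
        have hprod : (φ x + ψ x)^2*(φ x - ψ x)^2
            ≤ (2*c*(Jφ+Jψ)*ω^2) * (c*Jδ*ω^2) := by
          refine mul_le_mul hsum hδsq (sq_nonneg _) ?_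
          have : (0:ℝ) ≤ Jφ + Jψ := by linarith
          positivity
        calc (φ x + ψ x)^2*(φ x - ψ x)^2 * w x
            ≤ (2*c*(Jφ+Jψ)*ω^2) * (c*Jδ*ω^2) * w x :=
              mul_le_mul_of_nonneg_right hprod hW0
          _ = 2*(c^2*((Jφ+Jψ)*Jδ)) * (ω * (ω^3 * w x)) := by ring
          _ = 2*(c^2*((Jφ+Jψ)*Jδ)) * ω := by rw [hω3, mul_one]
      have hδ1 : (φ x - ψ x)^2 ≤ c*Jδ := by
        refine le_trans hδsq ?_
        linarith [mul_nonneg (mul_nonneg hc0.le hJδnn) (sub_nonneg.2 hω2)]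
      have hψ1 : (ψ x)^2 ≤ c*Jψ := by
        refine le_trans hψsq ?_
        linarith [mul_nonneg (mul_nonneg hc0.le hJψnn) (sub_nonneg.2 hω2)]
      have hB6 : (φ x - ψ x)^2*(a1 x)^2 * w x ≤ c*Jδ * ((a1 x)^2 * w x) := by
        linarith [mul_nonneg (sub_nonneg.2 hδ1)
          (mul_nonneg (sq_nonneg (a1 x)) hW0)]
      have hB7 : (ψ x)^2*(a1 x - b1 x)^2 * w x ≤ c*Jψ * ((a1 x - b1 x)^2 * w x) := by
        linarith [mul_nonneg (sub_nonneg.2 hψ1)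
          (mul_nonneg (sq_nonneg (a1 x - b1 x)) hW0)]
      have nn1 : (0:ℝ) ≤ c^3*Jφ * ((a1 x - b1 x)^2 * w x) :=
        mul_nonneg (mul_nonneg (by positivity) hJφnn)
          (mul_nonneg (sq_nonneg _) hW0)
      have nn2 : (0:ℝ) ≤ c*Jψ * ((a2 x - b2 x)^2 * w x) :=
        mul_nonneg (mul_nonneg hc0.le hJψnn)
          (mul_nonneg (sq_nonneg _) hW0)
      have nn3 : (0:ℝ) ≤ c^3*Jδ * ((b1 x)^2 * w x) :=
        mul_nonneg (mul_nonneg (by positivity) hJδnn)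
          (mul_nonneg (sq_nonneg _) hW0)
      have nn4 : (0:ℝ) ≤ c*Jδ * ((a2 x)^2 * w x) :=
        mul_nonneg (mul_nonneg hc0.le hJδnn)
          (mul_nonneg (sq_nonneg _) hW0)
      linarith [k1, k2, hB1, hB2, hB3, hB4, hB5, hB6, hB7, nn1, nn2, nn3, nn4]
    have hnn : 0 ≤ᵐ[volume.restrict (Set.Ici (0:ℝ))] (fun x =>
        (((a1 x * (∫ y in (0:ℝ)..x, φ y) + (φ x) ^ 2) -
          (b1 x * (∫ y in (0:ℝ)..x, ψ y) + (ψ x) ^ 2)) ^ 2 +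
         ((a2 x * (∫ y in (0:ℝ)..x, φ y) + 3 * φ x * a1 x) -
          (b2 x * (∫ y in (0:ℝ)..x, ψ y) + 3 * ψ x * b1 x)) ^ 2) * w x) :=
      ae_restrict_of_forall_mem measurableSet_Ici fun x hx =>
        mul_nonneg (by positivity) (hw0 x hx)
    have hi1 : IntegrableOn (fun x => (4*(c^3*Jφ) + 36*(c*Jψ)) *
        (((a1 x - b1 x)^2 + (a2 x - b2 x)^2) * w x)) (Set.Ici 0) :=
      hδI.const_mul _
    have hi2 : IntegrableOn (fun x => 4*(c^3*Jδ) *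
        (((b1 x)^2 + (b2 x)^2) * w x)) (Set.Ici 0) := hψU.2.2.const_mul _
    have hi3 : IntegrableOn (fun x => 36*(c*Jδ) *
        (((a1 x)^2 + (a2 x)^2) * w x)) (Set.Ici 0) := hφU.2.2.const_mul _
    have hi4 : IntegrableOn (fun x => 6*(c^2*((Jφ+Jψ)*Jδ)) *
        (w x)^(-(1/3):ℝ)) (Set.Ici 0) := hw13.const_mul _
    have hg : IntegrableOn (fun x =>
        (4*(c^3*Jφ) + 36*(c*Jψ)) * (((a1 x - b1 x)^2 + (a2 x - b2 x)^2) * w x)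
        + 4*(c^3*Jδ) * (((b1 x)^2 + (b2 x)^2) * w x)
        + 36*(c*Jδ) * (((a1 x)^2 + (a2 x)^2) * w x)
        + 6*(c^2*((Jφ+Jψ)*Jδ)) * (w x)^(-(1/3):ℝ)) (Set.Ici 0) :=
      ((hi1.add hi2).add hi3).add hi4
    have hmono := integral_mono_of_nonneg hnn hg
      (ae_restrict_of_forall_mem measurableSet_Ici hptwise)
    have hgval : (∫ x in Set.Ici (0:ℝ),
        ((4*(c^3*Jφ) + 36*(c*Jψ)) * (((a1 x - b1 x)^2 + (a2 x - b2 x)^2) * w x)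
        + 4*(c^3*Jδ) * (((b1 x)^2 + (b2 x)^2) * w x)
        + 36*(c*Jδ) * (((a1 x)^2 + (a2 x)^2) * w x)
        + 6*(c^2*((Jφ+Jψ)*Jδ)) * (w x)^(-(1/3):ℝ)))
        = (4*(c^3*Jφ) + 36*(c*Jψ)) * Jδ + 4*(c^3*Jδ) * Jψ
          + 36*(c*Jδ) * Jφ + 6*(c^2*((Jφ+Jψ)*Jδ)) * c13 := by
      have hi12 : IntegrableOn (fun x =>
          (4*(c^3*Jφ) + 36*(c*Jψ)) * (((a1 x - b1 x)^2 + (a2 x - b2 x)^2) * w x)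
          + 4*(c^3*Jδ) * (((b1 x)^2 + (b2 x)^2) * w x)) (Set.Ici 0) :=
        hi1.add hi2
      have hi123 : IntegrableOn (fun x =>
          (4*(c^3*Jφ) + 36*(c*Jψ)) * (((a1 x - b1 x)^2 + (a2 x - b2 x)^2) * w x)
          + 4*(c^3*Jδ) * (((b1 x)^2 + (b2 x)^2) * w x)
          + 36*(c*Jδ) * (((a1 x)^2 + (a2 x)^2) * w x)) (Set.Ici 0) :=
        hi12.add hi3
      rw [integral_add hi123 hi4, integral_add hi12 hi3,
        integral_add hi1 hi2, integral_const_mul, integral_const_mul,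
        integral_const_mul, integral_const_mul]
    have harith : (4*(c^3*Jφ) + 36*(c*Jψ)) * Jδ + 4*(c^3*Jδ) * Jψ
          + 36*(c*Jδ) * Jφ + 6*(c^2*((Jφ+Jψ)*Jδ)) * c13
        ≤ 86 * c^3 * ((Jφ + Jψ) * Jδ) := by
      have m1 : c ≤ c^3 := by nlinarith
      have m2 : c^2*c13 ≤ c^3 := by nlinarith [mul_nonneg (sq_nonneg c) (sub_nonneg.2 hc13c)]
      have t2 : 36*(c*(Jψ*Jδ)) ≤ 36*(c^3*(Jψ*Jδ)) := by
        linarith [mul_le_mul_of_nonneg_right m1 (mul_nonneg hJψnn hJδnn)]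
      have t3 : 36*(c*(Jδ*Jφ)) ≤ 36*(c^3*(Jδ*Jφ)) := by
        linarith [mul_le_mul_of_nonneg_right m1 (mul_nonneg hJδnn hJφnn)]
      have t4 : 6*((c^2*c13)*((Jφ+Jψ)*Jδ)) ≤ 6*(c^3*((Jφ+Jψ)*Jδ)) := by
        have hnn : (0:ℝ) ≤ (Jφ+Jψ)*Jδ := mul_nonneg (by linarith) hJδnn
        linarith [mul_le_mul_of_nonneg_right m2 hnn]
      linarith [t2, t3, t4, mul_nonneg (mul_nonneg (pow_nonneg hc0.le 3) hJφnn) hJδnn,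
        mul_nonneg (mul_nonneg (pow_nonneg hc0.le 3) hJψnn) hJδnn]
    rw [hgval] at hmono
    linarith
  -- expand the norms
  rw [UNorm_sq hw0, UNorm_sq hw0, UNorm_sq hw0, UNorm_sq hw0]
  simp only [intervalIntegral.integral_same, mul_zero, zero_add, add_zero,
    sub_self]
  rw [show (0:ℝ)^2 = 0 by norm_num]
  -- final arithmetic
  set Aφ : ℝ := (φ 0)^2 + (a1 0)^2 + Jφ with hAφdef
  set Aψ : ℝ := (ψ 0)^2 + (b1 0)^2 + Jψ with hAψdef
  set Aδ : ℝ := (φ 0 - ψ 0)^2 + (a1 0 - b1 0)^2 + Jδ with hAδdef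
  have hAφ : 0 ≤ Aφ := by positivity
  have hAψ : 0 ≤ Aψ := by positivity
  have hAδ : 0 ≤ Aδ := by positivity
  have hb : ((φ 0)^2 - (ψ 0)^2)^2 ≤ 2 * (Aφ + Aψ) * Aδ := by
    have e : ((φ 0)^2 - (ψ 0)^2)^2 = (φ 0 + ψ 0)^2 * (φ 0 - ψ 0)^2 := by ring
    rw [e]
    have h1 : (φ 0 + ψ 0)^2 ≤ 2 * (Aφ + Aψ) := by
      rw [hAφdef, hAψdef]; nlinarith [sq_nonneg (φ 0 - ψ 0)]
    have h2 : (φ 0 - ψ 0)^2 ≤ Aδ := by rw [hAδdef]; nlinarith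
    exact mul_le_mul h1 h2 (sq_nonneg _) (by linarith)
  have h86 : 86 * c^3 * ((Jφ + Jψ) * Jδ) ≤ 86 * c^3 * ((Aφ + Aψ) * Aδ) := by
    have h1 : Jφ + Jψ ≤ Aφ + Aψ := by rw [hAφdef, hAψdef]; nlinarith
    have h2 : Jδ ≤ Aδ := by rw [hAδdef]; nlinarith
    have h3 : (Jφ + Jψ) * Jδ ≤ (Aφ + Aψ) * Aδ :=
      mul_le_mul h1 h2 hJδnn (by linarith)
    have : (0:ℝ) ≤ 86 * c^3 := by positivity
    exact mul_le_mul_of_nonneg_left h3 this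
  have hXnn : (0:ℝ) ≤ (Aφ + Aψ) * Aδ := mul_nonneg (by linarith) hAδ
  have hc31 : (1:ℝ) ≤ c^3 := one_le_pow₀ hc1
  have hcc : 2 * ((Aφ + Aψ) * Aδ) ≤ 2 * c^3 * ((Aφ + Aψ) * Aδ) := by
    linarith [mul_nonneg (sub_nonneg.2 hc31) hXnn]
  have hfin : (0:ℝ) ≤ c^3 * ((Aφ + Aψ) * Aδ) := by positivity
  linarith [hIS, hb, h86, hcc, hfin]

end Stmt11Main
end
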